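/- arXiv:2012.08400 — 9 statements merged into one kernel-verified Lean document; each statement's English description precedes it below -/
import Mathlib

section
/- Let (X,r) be a simple solution of the Yang–Baxter equation. If |X| > 2, then (X,r) is indecomposable. -/
open Function

/-- The map `r₁₂ = r × id` on `X³`. -/
def yb12 {X : Type*} (r : X × X → X × X) : X × X × X → X × X × X :=
  fun p => ((r (p.1, p.2.1)).1, ((r (p.1, p.2.1)).2, p.2.2))

/-- The map `r₂₃ = id × r` on `X³`. -/
def yb23 {X : Type*} (r : X × X → X × X) : X × X × X → X × X × X :=
  fun p => (p.1, r p.2)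

/-- `(X, r)` is an involutive non-degenerate set-theoretic solution of the
Yang–Baxter equation. -/
structure IsYBSolution {X : Type*} (r : X × X → X × X) : Prop where
  invol : ∀ p, r (r p) = p
  sigma_bij : ∀ x, Function.Bijective (fun y => (r (x, y)).1)
  gamma_bij : ∀ y, Function.Bijective (fun x => (r (x, y)).2)
  braid : yb12 r ∘ yb23 r ∘ yb12 r = yb23 r ∘ yb12 r ∘ yb23 r

/-- A homomorphism of solutions: `f (σ_x y) = σ'_{f x} (f y)`. -/
def IsSolHom {X Y : Type*} (r : X × X → X × X) (s : Y × Y → Y × Y) (f : X → Y) : Prop :=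
  ∀ x y, f (r (x, y)).1 = (s (f x, f y)).1

/-- The permutation group `G(X,r)`: the subgroup of `Sym(X)` generated by the
permutations `σ_x`. -/
def permGroup {X : Type*} (r : X × X → X × X) : Subgroup (Equiv.Perm X) :=
  Subgroup.closure {g : Equiv.Perm X | ∃ x, ∀ y, g y = (r (x, y)).1}

/-- `(X,r)` is indecomposable: `G(X,r)` acts transitively on `X`. -/
def IsIndecomposable {X : Type*} (r : X × X → X × X) : Prop :=
  ∀ x y : X, ∃ g ∈ permGroup r, g x = y

/-- `(X,r)` is irretractable: `σ_x = σ_y` implies `x = y`. -/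
def IsIrretractable {X : Type*} (r : X × X → X × X) : Prop :=
  ∀ x y : X, (∀ z, (r (x, z)).1 = (r (y, z)).1) → x = y

/-- `(X,r)` is a simple solution: `|X| > 1` and every surjective homomorphism of
solutions from `(X,r)` is either bijective or has a one-element target. -/
def IsSimpleSolution {X : Type u} (r : X × X → X × X) : Prop :=
  Nontrivial X ∧ ∀ (Y : Type u) (s : Y × Y → Y × Y), IsYBSolution s →
    ∀ f : X → Y, Function.Surjective f → IsSolHom r s f →
      Function.Bijective f ∨ Subsingleton Y


/-- The trivial (flip) solution is a YB solution. -/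
lemma flip_isYBSolution {Y : Type*} : IsYBSolution (fun p : Y × Y => (p.2, p.1)) := by
  refine ⟨fun p => rfl, fun x => Function.bijective_id, fun y => Function.bijective_id, ?_⟩
  funext p
  rfl

/-- A simple solution of the YBE on a set with more than two
elements is indecomposable. -/
theorem simple_solution_indecomposable {X : Type u} (r : X × X → X × X)
    (hsol : IsYBSolution r) (hsimple : IsSimpleSolution r)
    (hcard : 2 < Cardinal.mk X) :
    IsIndecomposable r := by
  classical
  have hnt : Nontrivial X := hsimple.1
  -- setoid of orbits of the permutation group
  let st : Setoid X :=
    ⟨fun a b => ∃ g ∈ permGroup r, g a = b, by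
      constructor
      · exact fun a => ⟨1, one_mem _, rfl⟩
      · rintro a b ⟨g, hg, rfl⟩
        exact ⟨g⁻¹, inv_mem hg, g.symm_apply_apply a⟩
      · rintro a b c ⟨g, hg, rfl⟩ ⟨h, hh, rfl⟩
        exact ⟨h * g, mul_mem hh hg, rfl⟩⟩
  -- σ_x as a permutation, in the group
  have hsig : ∀ x : X, ∃ g ∈ permGroup r, ∀ y, g y = (r (x, y)).1 := by
    intro x
    refine ⟨Equiv.ofBijective _ (hsol.sigma_bij x), ?_, fun y => rfl⟩
    exact Subgroup.subset_closure ⟨x, fun y => rfl⟩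
  have hrel : ∀ x y : X, st.r y ((r (x, y)).1) := by
    intro x y
    obtain ⟨g, hg, hgy⟩ := hsig x
    exact ⟨g, hg, hgy y⟩
  -- the quotient map is a solution homomorphism to the flip solution
  have hhom : IsSolHom r (fun p : Quotient st × Quotient st => (p.2, p.1))
      (Quotient.mk st) := by
    intro x y
    exact (Quotient.sound (Setoid.symm (hrel x y)))
  rcases hsimple.2 (Quotient st) _ flip_isYBSolution (Quotient.mk st)
      (Quotient.mk_surjective) hhom with hbij | hsub
  · -- then every σ_x is the identity, so r is the flip, contradiction with simplicity
    exfalso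
    have hfix : ∀ x y : X, (r (x, y)).1 = y := by
      intro x y
      exact hbij.1 (Quotient.sound (Setoid.symm (hrel x y)))
    have hflip : ∀ x y : X, r (x, y) = (y, x) := by
      intro x y
      have h1 : (r (x, y)).1 = y := hfix x y
      have h2 := hsol.invol (x, y)
      have h3 : r ((r (x, y)).1, (r (x, y)).2) = (x, y) := by
        simpa using h2
      have h4 : (r ((r (x, y)).1, (r (x, y)).2)).1 = (r (x, y)).2 :=
        hfix _ _
      have h5 : (r (x, y)).2 = x := by rw [h3] at h4; exact h4.symm
      exact Prod.ext h1 h5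
    -- pick three distinct elements
    obtain ⟨a, b, hab⟩ := hnt
    have h3le : (3 : Cardinal) ≤ Cardinal.mk X := by
      have h := Order.succ_le_of_lt hcard
      rwa [show Order.succ (2 : Cardinal) = 3 by
        rw [show (2 : Cardinal) = ((2 : ℕ) : Cardinal) by norm_num, Cardinal.succ_natCast]
        norm_num] at h
    obtain ⟨c', hc'a, hc'b⟩ := Cardinal.three_le h3le a b
    let f : X → ULift Bool := fun x => ⟨x = a⟩
    have hfs : Function.Surjective f := by
      intro u
      rcases u with ⟨_ | _⟩
      · exact ⟨c', by simp [f, hc'a]⟩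
      · exact ⟨a, by simp [f]⟩
    have hfh : IsSolHom r (fun p : ULift Bool × ULift Bool => (p.2, p.1)) f := by
      intro x y
      rw [hflip]
    rcases hsimple.2 (ULift Bool) _ flip_isYBSolution f hfs hfh with hb | hs
    · have hbc : f b = f c' := by simp [f, hab.symm, hc'a]
      exact hc'b.symm (hb.1 hbc)
    · exact absurd (hs.elim (⟨true⟩ : ULift Bool) ⟨false⟩) (by simp)
  · -- subsingleton quotient: one orbit
    intro x y
    have : Quotient.mk st x = Quotient.mk st y := hsub.elim _ _
    exact Quotient.exact this
end

section
/- Let n > 1 be an integer, let t ∈ ℤ/(n) be invertible, and let j₀,…,j_{n−1} ∈ ℤ/(n) (indices read modulo n) satisfy j_i = j_{−i} for all i and j_{tˢi} = tˢ j_i − (tˢ − 1) j₀ for all i ∈ ℤ/(n) and all s ∈ ℤ. Suppose that for every nonzero i ∈ ℤ/(n) there exists k ∈ ℤ/(n) such that j_{i+k} − j_k is invertible. Define r : (ℤ/(n))² × (ℤ/(n))² → (ℤ/(n))² × (ℤ/(n))² by r((i,j),(k,l)) = (σ_{(i,j)}(k,l), σ_{σ_{(i,j)}(k,l)}⁻¹(i,j)),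 where σ_{(i,j)}(k,l) = (tk + j, t(l − j_{tk+j−i})). Then ((ℤ/(n))², r) is an indecomposable and irretractable solution of the YBE. If, moreover, (i) j₀ − j_i is invertible for every nonzero i ∈ ℤ/(n), and (ii) j_i − j_k is invertible whenever j_i ≠ j_k, then ((ℤ/(n))², r) is a simple solution of the YBE. -/
open Function

set_option linter.unusedSectionVars false
set_option linter.unusedVariables false
namespace SimpleYBAux


variable {n : ℕ}

def sig (τ : ZMod n) (J : ZMod n → ZMod n) (x y : ZMod n × ZMod n) : ZMod n × ZMod n :=
  (τ * y.1 + x.2, τ * (y.2 - J (τ * y.1 + x.2 - x.1)))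

def sigInv (τ' : ZMod n) (J : ZMod n → ZMod n) (z w : ZMod n × ZMod n) : ZMod n × ZMod n :=
  (τ' * (w.1 - z.2), τ' * w.2 + J (w.1 - z.1))

/-- the additive monoid of vertical displacement functions. -/
def FS (τ : ZMod n) (J : ZMod n → ZMod n) : AddSubmonoid (ZMod n → ZMod n) :=
  AddSubmonoid.closure {d | ∃ α β, d = fun a => J (τ * a + β) - J (τ * a + α)}

section eval

variable {τ τ' : ZMod n} {J : ZMod n → ZMod n}
variable (htt : τ * τ' = 1)

include htt

theorem sig_eval (i j d u y₂ : ZMod n) :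
    sig τ J (i, j) (τ' * (u - d), y₂) = (u + (j - d), τ * (y₂ - J (u + (j - d) - i))) := by
  simp only [sig]
  rw [show τ * (τ' * (u - d)) + j - i = u + (j - d) - i from by linear_combination (u - d) * htt]
  refine Prod.ext ?_ rfl
  show τ * (τ' * (u - d)) + j = u + (j - d)
  linear_combination (u - d) * htt

theorem shift_eval (α β a b : ZMod n) :
    sigInv τ' J (-β, 0) (sig τ J (-α, 0) (a, b)) =
      (a, b + (J (τ * a + β) - J (τ * a + α))) := by
  simp only [sig, sigInv]
  rw [show τ * a + 0 - -α = τ * a + α from by ring, show τ * a + 0 - -β = τ * a + β from by ring]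
  refine Prod.ext ?_ ?_ <;> simp only
  · linear_combination a * htt
  · linear_combination (b - J (τ * a + α)) * htt

end eval

section moves

variable {τ τ' : ZMod n} {J : ZMod n → ZMod n}
variable (htt : τ * τ' = 1)
variable (R : ZMod n × ZMod n → ZMod n × ZMod n → Prop)
variable (Ract : ∀ x x' z, R x x' → R (sig τ J x z) (sig τ J x' z))
variable (Rz : ∀ z x x', R x x' → R (sig τ J z x) (sig τ J z x'))
variable (Rzinv : ∀ z x x', R x x' → R (sigInv τ' J z x) (sigInv τ' J z x'))

include htt Ract in
/-- The `σ_x z ∼ σ_{x'} z` move, reparametrized. -/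
theorem moveD (i j i' j' : ZMod n) (hR : R (i, j) (i', j')) (u v : ZMod n) :
    R (u, v) (u + (j' - j), v + τ * (J (u - i) - J (u + (j' - j) - i'))) := by
  have h := Ract (i, j) (i', j') (τ' * (u - j), τ' * v + J (u - i)) hR
  rw [sig_eval htt, sig_eval htt] at h
  rw [show u + (j - j) = u from by ring] at h
  rw [show τ * (τ' * v + J (u - i) - J (u - i)) = v from by linear_combination v * htt] at h
  rw [show τ * (τ' * v + J (u - i) - J (u + (j' - j) - i')) =
      v + τ * (J (u - i) - J (u + (j' - j) - i')) from by linear_combination v * htt] at h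
  exact h

include htt Rz Rzinv in
/-- vertical shift moves preserve the relation. -/
theorem moveF : ∀ Δ ∈ FS τ J, ∀ x x', R x x' →
    R (x.1, x.2 + Δ x.1) (x'.1, x'.2 + Δ x'.1) := by
  intro Δ hΔ
  induction hΔ using AddSubmonoid.closure_induction with
  | mem d hd =>
      obtain ⟨α, β, rfl⟩ := hd
      intro x x' hR
      obtain ⟨a, b⟩ := x; obtain ⟨a', b'⟩ := x'
      have h := Rzinv (-β, 0) _ _ (Rz (-α, 0) _ _ hR)
      rwa [shift_eval htt, shift_eval htt] at h
  | zero =>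
      intro x x' hR; simpa using hR
  | add _ _ _ _ h₁ h₂ =>
      intro x x' hR
      have h := h₂ _ _ (h₁ x x' hR)
      simpa [add_assoc] using h

end moves


/-- evaluation difference homomorphism -/
def EvalDiff (i i' : ZMod n) : (ZMod n → ZMod n) →+ ZMod n :=
  (Pi.evalAddMonoidHom (fun _ => ZMod n) i') - (Pi.evalAddMonoidHom (fun _ => ZMod n) i)

def Adm (τ : ZMod n) (J : ZMod n → ZMod n) (i i' : ZMod n) : AddSubmonoid (ZMod n) :=
  (FS τ J).map (EvalDiff i i')

theorem mem_Adm {τ : ZMod n} {J : ZMod n → ZMod n} {i i' w : ZMod n} :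
    w ∈ Adm τ J i i' ↔ ∃ Δ ∈ FS τ J, Δ i' - Δ i = w := by
  simp only [Adm, AddSubmonoid.mem_map, EvalDiff, AddMonoidHom.sub_apply,
    Pi.evalAddMonoidHom_apply]

theorem Adm_gen (τ : ZMod n) (J : ZMod n → ZMod n) (i i' p q : ZMod n) :
    (J (p + τ * (i' - i)) - J (q + τ * (i' - i))) - (J p - J q) ∈ Adm τ J i i' := by
  rw [mem_Adm]
  refine ⟨fun a => J (τ * a + (p - τ * i)) - J (τ * a + (q - τ * i)),
    AddSubmonoid.subset_closure ⟨q - τ * i, p - τ * i, rfl⟩, ?_⟩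
  simp only []
  rw [show τ * i' + (p - τ * i) = p + τ * (i' - i) from by ring,
    show τ * i' + (q - τ * i) = q + τ * (i' - i) from by ring,
    show τ * i + (p - τ * i) = p from by ring,
    show τ * i + (q - τ * i) = q from by ring]

theorem Adm_two {τ : ZMod n} {J : ZMod n → ZMod n}
    (hsym : ∀ i : ZMod n, J (-i) = J i) (i i' : ZMod n) :
    2 * (J 0 - J (τ * (i' - i))) ∈ Adm τ J i i' := by
  have h := Adm_gen τ J i i' (-(τ * (i' - i))) 0
  rw [show -(τ * (i' - i)) + τ * (i' - i) = 0 from by ring, zero_add, hsym (τ * (i' - i))] at h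
  have e : (2 : ZMod n) * (J 0 - J (τ * (i' - i))) =
      J 0 - J (τ * (i' - i)) - (J (τ * (i' - i)) - J 0) := by ring
  rwa [e]

theorem top_of_unit_mem [NeZero n] {A : AddSubmonoid (ZMod n)} {μ : ZMod n}
    (hμ : IsUnit μ) (h : μ ∈ A) (x : ZMod n) : x ∈ A := by
  obtain ⟨u, rfl⟩ := hμ
  have e : x = (x * ↑u⁻¹).val • (u : ZMod n) := by
    rw [nsmul_eq_mul, ZMod.natCast_zmod_val]
    have huv : (↑u⁻¹ : ZMod n) * ↑u = 1 := by
      rw [u.inv_mul]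
    calc x = x * ((↑u⁻¹ : ZMod n) * ↑u) := by rw [huv, mul_one]
    _ = x * ↑u⁻¹ * ↑u := by ring
  exact e ▸ AddSubmonoid.nsmul_mem A h _

section even

variable (h2 : 2 ∣ n)

theorem even_exists [NeZero n] {x : ZMod n} (hx : ZMod.castHom h2 (ZMod 2) x = 0) :
    ∃ y : ZMod n, x = 2 * y := by
  rw [ZMod.castHom_apply, ZMod.cast_eq_val] at hx
  have hdvd : 2 ∣ x.val := by
    rwa [ZMod.natCast_eq_zero_iff] at hx
  refine ⟨((x.val / 2 : ℕ) : ZMod n), ?_⟩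
  have : ((2 * (x.val / 2) : ℕ) : ZMod n) = (x.val : ZMod n) := by
    rw [Nat.mul_div_cancel' hdvd]
  rw [ZMod.natCast_zmod_val] at this
  push_cast at this
  exact this.symm

theorem pi_one_of_unit {x : ZMod n} (hx : IsUnit x) : ZMod.castHom h2 (ZMod 2) x = 1 := by
  have h1 : IsUnit (ZMod.castHom h2 (ZMod 2) x) := hx.map _
  have hall : ∀ a : ZMod 2, a ≠ 0 → a = 1 := by decide
  exact hall _ h1.ne_zero

theorem even_mem_Adm [NeZero n] {τ : ZMod n} {J : ZMod n → ZMod n}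
    (hsym : ∀ i : ZMod n, J (-i) = J i) {i i' : ZMod n}
    (hu : IsUnit (J 0 - J (τ * (i' - i)))) {x : ZMod n}
    (hx : ZMod.castHom h2 (ZMod 2) x = 0) : x ∈ Adm τ J i i' := by
  obtain ⟨y, rfl⟩ := even_exists h2 hx
  obtain ⟨u, hu'⟩ := hu
  have h2μ := Adm_two (τ := τ) hsym i i'
  have e : 2 * y = (y * ↑u⁻¹).val • (2 * (J 0 - J (τ * (i' - i)))) := by
    rw [nsmul_eq_mul, ZMod.natCast_zmod_val, ← hu']
    have huv : (↑u⁻¹ : ZMod n) * ↑u = 1 := by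
      rw [u.inv_mul]
    calc 2 * y = 2 * y * ((↑u⁻¹ : ZMod n) * ↑u) := by rw [huv, mul_one]
    _ = y * ↑u⁻¹ * (2 * ↑u) := by ring
  exact e ▸ AddSubmonoid.nsmul_mem _ h2μ _

end even

section basic

variable {τ τ' : ZMod n} {J : ZMod n → ZMod n}
variable (htt : τ * τ' = 1)

def Gam (τ τ' : ZMod n) (J : ZMod n → ZMod n) (x y : ZMod n × ZMod n) : ZMod n × ZMod n :=
  (τ' * x.1 - y.2 + J (τ * y.1 + x.2 - x.1), τ' * x.2 + J (τ * y.1 + x.2 - x.1))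

include htt

theorem sig_sigInv (z w : ZMod n × ZMod n) : sig τ J z (sigInv τ' J z w) = w := by
  obtain ⟨a, b⟩ := z; obtain ⟨A, B⟩ := w
  simp only [sig, sigInv, Prod.mk.injEq]
  constructor
  · linear_combination (A - b) * htt
  · have h1 : τ * (τ' * (A - b)) + b - a = A - a := by linear_combination (A - b) * htt
    rw [h1]; linear_combination B * htt

theorem sigInv_sig (z w : ZMod n × ZMod n) : sigInv τ' J z (sig τ J z w) = w := by
  obtain ⟨a, b⟩ := z; obtain ⟨A, B⟩ := w
  simp only [sig, sigInv, Prod.mk.injEq]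
  constructor
  · linear_combination A * htt
  · linear_combination (B - J (τ * A + b - a)) * htt

theorem sig_inj (z : ZMod n × ZMod n) : Function.Injective (sig τ J z) := by
  intro w w' h
  have := congrArg (sigInv τ' J z) h
  rwa [sigInv_sig htt, sigInv_sig htt] at this

theorem gam_eq (hsym : ∀ i : ZMod n, J (-i) = J i) (x y : ZMod n × ZMod n) :
    sigInv τ' J (sig τ J x y) x = Gam τ τ' J x y := by
  obtain ⟨i, j⟩ := x; obtain ⟨k, l⟩ := y
  simp only [sig, sigInv, Gam, Prod.mk.injEq]
  constructor
  · linear_combination (-l + J (τ * k + j - i)) * htt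
  · have h1 : i - (τ * k + j) = -(τ * k + j - i) := by ring
    rw [h1, hsym]

/-- `σ_z` as a permutation. -/
def sigPerm (τ τ' : ZMod n) (J : ZMod n → ZMod n) (htt : τ * τ' = 1)
    (z : ZMod n × ZMod n) : Equiv.Perm (ZMod n × ZMod n) :=
  ⟨sig τ J z, sigInv τ' J z, sigInv_sig htt z, sig_sigInv htt z⟩

theorem sigPerm_apply (z w : ZMod n × ZMod n) : sigPerm τ τ' J htt z w = sig τ J z w := rfl

theorem sigPerm_inv_apply (z w : ZMod n × ZMod n) :
    (sigPerm τ τ' J htt z)⁻¹ w = sigInv τ' J z w := rfl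

end basic

section withr

variable {τ τ' : ZMod n} {J : ZMod n → ZMod n}
variable {r : (ZMod n × ZMod n) × (ZMod n × ZMod n) → (ZMod n × ZMod n) × (ZMod n × ZMod n)}
variable (htt : τ * τ' = 1)
variable (hr1 : ∀ x y, (r (x, y)).1 = sig τ J x y)
variable (hr2 : ∀ x y, sig τ J (sig τ J x y) ((r (x, y)).2) = x)

include htt hr1 hr2

theorem r_eq (x y : ZMod n × ZMod n) :
    r (x, y) = (sig τ J x y, sigInv τ' J (sig τ J x y) x) := by
  refine Prod.ext (hr1 x y) ?_
  apply sig_inj htt (sig τ J x y)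
  show sig τ J _ ((r (x, y)).2) = _
  rw [hr2, sig_sigInv htt]

theorem r_invol (p : (ZMod n × ZMod n) × (ZMod n × ZMod n)) : r (r p) = p := by
  obtain ⟨x, y⟩ := p
  rw [r_eq htt hr1 hr2 x y, r_eq htt hr1 hr2, sig_sigInv htt, sigInv_sig htt]

theorem r_sigma_bij (x : ZMod n × ZMod n) :
    Function.Bijective (fun y => (r (x, y)).1) := by
  simp only [hr1]
  exact Function.bijective_iff_has_inverse.mpr
    ⟨sigInv τ' J x, fun y => sigInv_sig htt x y, fun y => sig_sigInv htt x y⟩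

theorem r_gamma_bij [NeZero n] (hsym : ∀ i : ZMod n, J (-i) = J i) (y : ZMod n × ZMod n) :
    Function.Bijective (fun x => (r (x, y)).2) := by
  have he : (fun x => (r (x, y)).2) = fun x => Gam τ τ' J x y := by
    funext x
    rw [show (r (x, y)).2 = (sig τ J x y, sigInv τ' J (sig τ J x y) x).2 from
      congrArg Prod.snd (r_eq htt hr1 hr2 x y)]
    exact gam_eq htt hsym x y
  rw [he]
  rw [← Finite.injective_iff_bijective]
  obtain ⟨k, l⟩ := y
  rintro ⟨i, j⟩ ⟨i', j'⟩ h
  simp only [Gam, Prod.mk.injEq] at h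
  have h3 : τ' * i - τ' * j = τ' * i' - τ' * j' := by linear_combination h.1 - h.2
  have key : τ * k + j - i = τ * k + j' - i' := by
    linear_combination (-τ) * h3 + (j' - i' - j + i) * htt
  rw [key] at h
  have hj : j = j' := by linear_combination τ * h.2 - (j - j') * htt
  have hi : i = i' := by linear_combination hj - key
  rw [hi, hj]

end withr

section step1

variable [NeZero n] {τ τ' : ZMod n} {J : ZMod n → ZMod n}
variable (htt : τ * τ' = 1)
variable (hsym : ∀ i : ZMod n, J (-i) = J i)
variable (hstep : ∀ i : ZMod n, i ≠ 0 → ∃ k, IsUnit (J (i + k) - J k))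
variable (R : ZMod n × ZMod n → ZMod n × ZMod n → Prop)
variable (Ract : ∀ x x' z, R x x' → R (sig τ J x z) (sig τ J x' z))
variable (Rz : ∀ z x x', R x x' → R (sig τ J z x) (sig τ J z x'))
variable (Rzinv : ∀ z x x', R x x' → R (sigInv τ' J z x) (sigInv τ' J z x'))

/-- existence of a nontrivial one-column related pair -/
def SC (R : ZMod n × ZMod n → ZMod n × ZMod n → Prop) : Prop :=
  ∃ u v c : ZMod n, c ≠ 0 ∧ R (u, v) (u, v + c)

theorem isUnit_zero_contra (hn : 1 < n) : ¬ IsUnit (0 : ZMod n) := by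
  haveI : Fact (1 < n) := ⟨hn⟩
  exact fun h => h.ne_zero rfl

include hstep in
theorem exists_Jdiff (hn : 1 < n) {d : ZMod n} (hd : d ≠ 0) : ∃ w, J (w + d) ≠ J w := by
  by_contra hcon
  push_neg at hcon
  obtain ⟨k, hk⟩ := hstep d hd
  rw [show d + k = k + d from by ring, hcon k, sub_self] at hk
  exact isUnit_zero_contra hn hk

include htt in
theorem tau_cancel (X : ZMod n) : τ' * (τ * X) = X := by linear_combination X * htt

include htt in
theorem tau_ne {X : ZMod n} (hX : X ≠ 0) : τ * X ≠ 0 := by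
  intro h
  apply hX
  rw [← tau_cancel htt X, h, mul_zero]

include htt hstep Ract in
theorem lemL1 (hn : 1 < n) (i i' b : ZMod n) (hne : i ≠ i') (hR : R (i, b) (i', b)) :
    SC R := by
  obtain ⟨w, hw⟩ := exists_Jdiff hstep hn (sub_ne_zero.mpr (Ne.symm hne))
  have h := moveD htt R Ract i b i' b hR (w + i') 0
  rw [sub_self, add_zero, show w + i' - i = w + (i' - i) from by ring,
    show w + i' - i' = w from by ring] at h
  refine ⟨w + i', 0, τ * (J (w + (i' - i)) - J w), ?_, ?_⟩
  · intro hzero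
    apply hw
    have := tau_cancel htt (J (w + (i' - i)) - J w)
    rw [hzero, mul_zero] at this
    exact sub_eq_zero.mp this.symm
  · rw [show (0 : ZMod n) + τ * (J (w + (i' - i)) - J w) =
      0 + τ * (J (w + (i' - i)) - J w) from rfl]
    exact h

include htt hstep Ract in
theorem lemL2 (hn : 1 < n) (i i' b b' q : ZMod n) (hbb : b ≠ b')
    (hq : J (q + ((b' - b) - (i' - i))) = J q) (hR : R (i, b) (i', b')) : SC R := by
  have h := moveD htt R Ract i b i' b' hR (q + i) 0
  rw [show q + i - i = q from by ring,
    show q + i + (b' - b) - i' = q + ((b' - b) - (i' - i)) from by ring,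
    hq, sub_self, mul_zero, add_zero] at h
  refine lemL1 htt hstep R Ract hn (q + i) (q + i + (b' - b)) 0 ?_ h
  intro hcon
  apply hbb
  linear_combination hcon

include htt hstep Ract Rz Rzinv in
theorem lemL3 (hn : 1 < n) (i i' b b' : ZMod n) (hne : i ≠ i')
    (hA : ((i' - i) - (b' - b)) ∈ Adm τ J i i') (hR : R (i, b) (i', b')) : SC R := by
  rw [mem_Adm] at hA
  obtain ⟨Δ, hΔ, hE⟩ := hA
  have h := moveF htt R Rz Rzinv Δ hΔ (i, b) (i', b') hR
  simp only at h
  refine lemL2 htt hstep R Ract hn i i' (b + Δ i) (b' + Δ i') 0 ?_ ?_ h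
  · intro hcon
    apply hne
    have : i' - i = 0 := by linear_combination - hE - hcon
    have := sub_eq_zero.mp this
    exact this.symm
  · rw [show (0:ZMod n) + (b' + Δ i' - (b + Δ i) - (i' - i)) =
      (Δ i' - Δ i) - ((i' - i) - (b' - b)) from by ring, hE, sub_self]

include htt hstep Ract Rz Rzinv in
theorem lemL3' (hn : 1 < n) (i i' b b' : ZMod n) (hne : i ≠ i')
    (hA : (-(b' - b)) ∈ Adm τ J i i') (hR : R (i, b) (i', b')) : SC R := by
  rw [mem_Adm] at hA
  obtain ⟨Δ, hΔ, hE⟩ := hA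
  have h := moveF htt R Rz Rzinv Δ hΔ (i, b) (i', b') hR
  simp only at h
  have e : b' + Δ i' = b + Δ i := by linear_combination hE
  rw [e] at h
  exact lemL1 htt hstep R Ract hn i i' (b + Δ i) hne h

include htt hsym hstep Ract Rz Rzinv in
theorem step1 (hn : 1 < n) (hτ : IsUnit τ)
    (hi : ∀ i : ZMod n, i ≠ 0 → IsUnit (J 0 - J i))
    (x x' : ZMod n × ZMod n) (hxx : x ≠ x') (hR : R x x') : SC R := by
  obtain ⟨i, j⟩ := x
  obtain ⟨i', j'⟩ := x'
  by_cases hii' : i = i'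
  · -- same column already
    subst hii'
    have hj : j ≠ j' := fun h => hxx (by rw [h])
    rw [show j' = j + (j' - j) from by ring] at hR
    exact ⟨i, j, j' - j, sub_ne_zero.mpr (Ne.symm hj), hR⟩
  · have hτε : τ * (i' - i) ≠ 0 := tau_ne htt (sub_ne_zero.mpr (Ne.symm hii'))
    have hu : IsUnit (J 0 - J (τ * (i' - i))) := hi _ hτε
    by_cases h2u : IsUnit (2 : ZMod n)
    · refine lemL3 htt hstep R Ract Rz Rzinv hn i i' j j' hii' ?_ hR
      exact top_of_unit_mem (h2u.mul hu) (Adm_two hsym i i') _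
    · have h2 : 2 ∣ n := by
        rcases (Nat.dvd_prime Nat.prime_two).mp (Nat.gcd_dvd_left 2 n) with h | h
        · exact absurd ((ZMod.isUnit_iff_coprime 2 n).mpr h) (by simpa using h2u)
        · exact h ▸ Nat.gcd_dvd_right 2 n
      have hall : ∀ a : ZMod 2, a ≠ 0 → a = 1 := by decide
      by_cases hδε : ZMod.castHom h2 (ZMod 2) ((i' - i) - (j' - j)) = 0
      · exact lemL3 htt hstep R Ract Rz Rzinv hn i i' j j' hii'
          (even_mem_Adm h2 hsym hu hδε) hR
      · by_cases hδ : ZMod.castHom h2 (ZMod 2) (-(j' - j)) = 0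
        · exact lemL3' htt hstep R Ract Rz Rzinv hn i i' j j' hii'
            (even_mem_Adm h2 hsym hu hδ) hR
        · -- conjugation branch
          have hR1 := Rz (0, -(τ * (i' - i)) - τ * i) _ _ hR
          simp only [sig] at hR1
          rw [show τ * i + (-(τ * (i' - i)) - τ * i) = -(τ * (i' - i)) from by ring] at hR1
          rw [show -(τ * (i' - i)) - 0 = -(τ * (i' - i)) from by ring] at hR1
          rw [hsym (τ * (i' - i))] at hR1
          rw [show τ * i' + (-(τ * (i' - i)) - τ * i) = 0 from by ring] at hR1
          rw [show (0 : ZMod n) - (0 : ZMod n) = 0 from by ring] at hR1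
          refine lemL3 htt hstep R Ract Rz Rzinv hn (-(τ * (i' - i))) 0
            (τ * (j - J (τ * (i' - i)))) (τ * (j' - J 0)) ?_ ?_ hR1
          · intro hcon
            exact hτε (neg_eq_zero.mp hcon)
          · have hτ2 : τ * ((0:ZMod n) - -(τ * (i' - i))) ≠ 0 := by
              rw [show (0:ZMod n) - -(τ * (i' - i)) = τ * (i' - i) from by ring]
              exact tau_ne htt hτε
            refine even_mem_Adm h2 hsym (hi _ hτ2) ?_
            rw [show (0:ZMod n) - -(τ * (i' - i)) -
                (τ * (j' - J 0) - τ * (j - J (τ * (i' - i)))) =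
                τ * (((i' - i) - (j' - j)) + (J 0 - J (τ * (i' - i)))) from by ring]
            rw [map_mul, map_add, pi_one_of_unit h2 hτ, one_mul,
              pi_one_of_unit h2 hu]
            have h1 : ZMod.castHom h2 (ZMod 2) ((i' - i) - (j' - j)) = 1 := hall _ hδε
            rw [h1]
            decide

include htt in
theorem evalFS_surj (hn : 1 < n) (hi : ∀ i : ZMod n, i ≠ 0 → IsUnit (J 0 - J i)) :
    ∀ u w : ZMod n, ∃ Δ ∈ FS τ J, Δ u = w := by
  haveI : Fact (1 < n) := ⟨hn⟩
  intro u w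
  have hgen : (J 0 - J 1) ∈ (FS τ J).map (Pi.evalAddMonoidHom (fun _ => ZMod n) u) := by
    refine AddSubmonoid.mem_map.mpr ⟨fun a => J (τ * a + (0 - τ * u)) - J (τ * a + (1 - τ * u)),
      AddSubmonoid.subset_closure ⟨1 - τ * u, 0 - τ * u, rfl⟩, ?_⟩
    simp only [Pi.evalAddMonoidHom_apply]
    rw [show τ * u + (0 - τ * u) = 0 from by ring, show τ * u + (1 - τ * u) = 1 from by ring]
  have hw := top_of_unit_mem (hi 1 one_ne_zero) hgen w
  obtain ⟨Δ, hΔ, hΔu⟩ := AddSubmonoid.mem_map.mp hw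
  exact ⟨Δ, hΔ, hΔu⟩

end step1

section step2

variable [NeZero n] {τ τ' : ZMod n} {J : ZMod n → ZMod n}
variable (htt : τ * τ' = 1)
variable (hsym : ∀ i : ZMod n, J (-i) = J i)
variable (hstep : ∀ i : ZMod n, i ≠ 0 → ∃ k, IsUnit (J (i + k) - J k))
variable (R : ZMod n × ZMod n → ZMod n × ZMod n → Prop)
variable (hRe : Equivalence R)
variable (Rz : ∀ z x x', R x x' → R (sig τ J z x) (sig τ J z x'))
variable (Rzinv : ∀ z x x', R x x' → R (sigInv τ' J z x) (sigInv τ' J z x'))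
variable (Rgam : ∀ z x x', R x x' →
    R (sigInv τ' J (sig τ J x z) x) (sigInv τ' J (sig τ J x' z) x'))

theorem unit_inv_mul {M : Type*} [Monoid M] {a : M} (h : IsUnit a) :
    (↑h.unit⁻¹ : M) * a = 1 := by
  have e := h.unit.inv_mul
  rwa [h.unit_spec] at e

include htt hsym hstep hRe Rz Rzinv Rgam in
theorem step2 (hn : 1 < n) (hτ : IsUnit τ)
    (hi : ∀ i : ZMod n, i ≠ 0 → IsUnit (J 0 - J i))
    (hSC : SC R) : ∀ p q, R p q := by
  haveI : Fact (1 < n) := ⟨hn⟩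
  obtain ⟨u₀, v₀, c, hc, h0⟩ := hSC
  -- 1. full translates in the column u₀
  have col1 : ∀ v, R (u₀, v) (u₀, v + c) := by
    intro v
    obtain ⟨Δ, hΔ, hΔu⟩ := evalFS_surj htt hn hi u₀ (v - v₀)
    have h := moveF htt R Rz Rzinv Δ hΔ _ _ h0
    simp only at h
    rw [hΔu, show v₀ + (v - v₀) = v from by ring,
      show v₀ + c + (v - v₀) = v + c from by ring] at h
    exact h
  -- 2. translates by τ*c in every column
  have colAll : ∀ u v, R (u, v) (u, v + τ * c) := by
    intro u v
    have h := Rz (0, u - τ * u₀) _ _ (col1 (τ' * v + J u))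
    simp only [sig] at h
    rw [show τ * u₀ + (u - τ * u₀) = u from by ring, show u - (0:ZMod n) = u from by ring,
      show τ * (τ' * v + J u - J u) = v from by linear_combination v * htt,
      show τ * (τ' * v + J u + c - J u) = v + τ * c from by
        linear_combination v * htt] at h
    exact h
  have hc₁ : τ * c ≠ 0 := tau_ne htt hc
  obtain ⟨k₀, hk₀⟩ := hstep (τ * c) hc₁
  -- 3. the diagonal cross move
  have cross : ∀ s β, R (s, β)
      (s + (J (τ * c + k₀) - J k₀), β + (τ' * (τ * c) + (J (τ * c + k₀) - J k₀))) := by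
    intro s β
    have h := Rgam (τ' * (k₀ - τ * (β - J k₀)), J k₀ - s)
      (0, τ * (β - J k₀)) (0, τ * (β - J k₀) + τ * c) (colAll 0 (τ * (β - J k₀)))
    simp only [sig, sigInv] at h
    rw [show τ * (τ' * (k₀ - τ * (β - J k₀))) + τ * (β - J k₀) = k₀ from by
        linear_combination (k₀ - τ * (β - J k₀)) * htt] at h
    rw [show k₀ - (0:ZMod n) = k₀ from by ring] at h
    rw [show (0:ZMod n) - τ * (J k₀ - s - J k₀) = τ * s from by ring] at h
    rw [show τ' * (τ * s) = s from tau_cancel htt s] at h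
    rw [show (0:ZMod n) - k₀ = -k₀ from by ring, hsym k₀] at h
    rw [show τ' * (τ * (β - J k₀)) + J k₀ = β from by
        linear_combination (β - J k₀) * htt] at h
    rw [show τ * (τ' * (k₀ - τ * (β - J k₀))) + (τ * (β - J k₀) + τ * c) =
        τ * c + k₀ from by linear_combination (k₀ - τ * (β - J k₀)) * htt] at h
    rw [show τ * c + k₀ - (0:ZMod n) = τ * c + k₀ from by ring] at h
    rw [show (0:ZMod n) - τ * (J k₀ - s - J (τ * c + k₀)) =
        τ * (s + (J (τ * c + k₀) - J k₀)) from by ring] at h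
    rw [show τ' * (τ * (s + (J (τ * c + k₀) - J k₀))) = s + (J (τ * c + k₀) - J k₀)
        from tau_cancel htt _] at h
    rw [show (0:ZMod n) - (τ * c + k₀) = -(τ * c + k₀) from by ring, hsym (τ * c + k₀)] at h
    rw [show τ' * (τ * (β - J k₀) + τ * c) + J (τ * c + k₀) =
        β + (τ' * (τ * c) + (J (τ * c + k₀) - J k₀)) from by
        linear_combination (β - J k₀) * htt] at h
    exact h
  -- 4. lines
  have lineN : ∀ N : ℕ, ∀ s β, R (s, β) (s + N • (J (τ * c + k₀) - J k₀),
      β + N • (τ' * (τ * c) + (J (τ * c + k₀) - J k₀))) := by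
    intro N
    induction N with
    | zero => intro s β; simpa using hRe.refl (s, β)
    | succ N ih =>
        intro s β
        have h2 := ih (s + (J (τ * c + k₀) - J k₀))
          (β + (τ' * (τ * c) + (J (τ * c + k₀) - J k₀)))
        have h := hRe.trans (cross s β) h2
        rw [show s + (J (τ * c + k₀) - J k₀) + N • (J (τ * c + k₀) - J k₀) =
            s + (N + 1) • (J (τ * c + k₀) - J k₀) from by
            rw [succ_nsmul]; ring] at h
        rw [show β + (τ' * (τ * c) + (J (τ * c + k₀) - J k₀)) +
            N • (τ' * (τ * c) + (J (τ * c + k₀) - J k₀)) =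
            β + (N + 1) • (τ' * (τ * c) + (J (τ * c + k₀) - J k₀)) from by
            rw [succ_nsmul]; ring] at h
        exact h
  have hie : (↑hk₀.unit⁻¹ : ZMod n) * (J (τ * c + k₀) - J k₀) = 1 := unit_inv_mul hk₀
  have line : ∀ g s β, R (s, β)
      (s + g, β + g * ↑hk₀.unit⁻¹ * (τ' * (τ * c) + (J (τ * c + k₀) - J k₀))) := by
    intro g s β
    have h := lineN (g * ↑hk₀.unit⁻¹).val s β
    rw [nsmul_eq_mul, nsmul_eq_mul, ZMod.natCast_zmod_val] at h
    rw [show g * ↑hk₀.unit⁻¹ * (J (τ * c + k₀) - J k₀) = g from by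
        rw [mul_assoc, hie, mul_one]] at h
    exact h
  obtain ⟨k₁, hk₁⟩ := hstep 1 one_ne_zero
  -- 5. unit-size vertical moves in every column
  have colUnit : ∀ C w, R (C, w) (C, w + τ * (J k₁ - J (1 + k₁))) := by
    intro C w
    have hline1 := line τ' 0
      (τ' * (w - ↑hk₀.unit⁻¹ * (τ' * (τ * c) + (J (τ * c + k₀) - J k₀))) + J k₁)
    have hz := Rz (C - 1 - k₁, C - 1) _ _ hline1
    simp only [sig] at hz
    rw [show τ * (0:ZMod n) + (C - 1) = C - 1 from by ring] at hz
    rw [show C - 1 - (C - 1 - k₁) = k₁ from by ring] at hz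
    rw [show τ * (τ' * (w - ↑hk₀.unit⁻¹ * (τ' * (τ * c) + (J (τ * c + k₀) - J k₀))) + J k₁
        - J k₁) = w - ↑hk₀.unit⁻¹ * (τ' * (τ * c) + (J (τ * c + k₀) - J k₀)) from by
        linear_combination (w - ↑hk₀.unit⁻¹ * (τ' * (τ * c) + (J (τ * c + k₀) - J k₀))) * htt]
      at hz
    rw [show τ * ((0:ZMod n) + τ') + (C - 1) = C from by linear_combination htt] at hz
    rw [show C - (C - 1 - k₁) = 1 + k₁ from by ring] at hz
    rw [show τ * (τ' * (w - ↑hk₀.unit⁻¹ * (τ' * (τ * c) + (J (τ * c + k₀) - J k₀))) + J k₁ +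
        τ' * ↑hk₀.unit⁻¹ * (τ' * (τ * c) + (J (τ * c + k₀) - J k₀)) - J (1 + k₁)) =
        w + τ * (J k₁ - J (1 + k₁)) from by
        linear_combination (w - ↑hk₀.unit⁻¹ * (τ' * (τ * c) + (J (τ * c + k₀) - J k₀))) * htt
          + (↑hk₀.unit⁻¹ * (τ' * (τ * c) + (J (τ * c + k₀) - J k₀))) * htt] at hz
    have hl := line 1 (C - 1)
      (w - ↑hk₀.unit⁻¹ * (τ' * (τ * c) + (J (τ * c + k₀) - J k₀)))
    rw [show C - 1 + 1 = C from by ring, one_mul,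
      show w - ↑hk₀.unit⁻¹ * (τ' * (τ * c) + (J (τ * c + k₀) - J k₀)) +
        ↑hk₀.unit⁻¹ * (τ' * (τ * c) + (J (τ * c + k₀) - J k₀)) = w from by ring] at hl
    exact hRe.trans (hRe.symm hl) hz
  have hν : IsUnit (τ * (J k₁ - J (1 + k₁))) := by
    rw [show τ * (J k₁ - J (1 + k₁)) = -(τ * (J (1 + k₁) - J k₁)) from by ring]
    exact (hτ.mul hk₁).neg
  -- 6. arbitrary vertical moves
  have colN : ∀ N : ℕ, ∀ C w, R (C, w) (C, w + N • (τ * (J k₁ - J (1 + k₁)))) := by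
    intro N
    induction N with
    | zero => intro C w; simpa using hRe.refl (C, w)
    | succ N ih =>
        intro C w
        have h := hRe.trans (colUnit C w) (ih C (w + τ * (J k₁ - J (1 + k₁))))
        rw [show w + τ * (J k₁ - J (1 + k₁)) + N • (τ * (J k₁ - J (1 + k₁))) =
            w + (N + 1) • (τ * (J k₁ - J (1 + k₁))) from by rw [succ_nsmul]; ring] at h
        exact h
  have colFull : ∀ C w d, R (C, w) (C, w + d) := by
    intro C w d
    have h := colN (d * ↑hν.unit⁻¹).val C w
    rw [nsmul_eq_mul, ZMod.natCast_zmod_val] at h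
    rw [show d * ↑hν.unit⁻¹ * (τ * (J k₁ - J (1 + k₁))) = d from by
        rw [mul_assoc, unit_inv_mul hν, mul_one]] at h
    exact h
  -- 7. conclude
  intro p q
  obtain ⟨p₁, p₂⟩ := p
  obtain ⟨q₁, q₂⟩ := q
  have h1 := line (q₁ - p₁) p₁ p₂
  rw [show p₁ + (q₁ - p₁) = q₁ from by ring] at h1
  have h2 := colFull q₁
    (p₂ + (q₁ - p₁) * ↑hk₀.unit⁻¹ * (τ' * (τ * c) + (J (τ * c + k₀) - J k₀)))
    (q₂ - (p₂ + (q₁ - p₁) * ↑hk₀.unit⁻¹ * (τ' * (τ * c) + (J (τ * c + k₀) - J k₀))))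
  rw [show p₂ + (q₁ - p₁) * ↑hk₀.unit⁻¹ * (τ' * (τ * c) + (J (τ * c + k₀) - J k₀)) +
      (q₂ - (p₂ + (q₁ - p₁) * ↑hk₀.unit⁻¹ * (τ' * (τ * c) + (J (τ * c + k₀) - J k₀)))) = q₂
      from by ring] at h2
  exact hRe.trans h1 h2

end step2

theorem braid_aux {τ τ' : ZMod n} {J : ZMod n → ZMod n}
    (htt : τ * τ' = 1)
    (hJ1 : ∀ a : ZMod n, J (τ * a) = τ * J a - (τ - 1) * J 0) :
    yb12 (fun p => (sig τ J p.1 p.2, Gam τ τ' J p.1 p.2)) ∘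
      yb23 (fun p => (sig τ J p.1 p.2, Gam τ τ' J p.1 p.2)) ∘
        yb12 (fun p => (sig τ J p.1 p.2, Gam τ τ' J p.1 p.2)) =
    yb23 (fun p => (sig τ J p.1 p.2, Gam τ τ' J p.1 p.2)) ∘
      yb12 (fun p => (sig τ J p.1 p.2, Gam τ τ' J p.1 p.2)) ∘
        yb23 (fun p => (sig τ J p.1 p.2, Gam τ τ' J p.1 p.2)) := by
  funext p
  obtain ⟨⟨i, j⟩, ⟨k, l⟩, ⟨m, q⟩⟩ := p
  simp only [Function.comp, yb12, yb23, sig, Gam]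
  rw [show (τ * m + (τ' * j + J (τ * k + j - i)) - (τ' * i - l + J (τ * k + j - i)))
      = τ * m + l + τ' * j - τ' * i from by ring]
  rw [show (τ * (τ * m + (τ' * j + J (τ * k + j - i))) + τ * (l - J (τ * k + j - i)) - (τ * k + j))
      = τ * (τ * m + l - k) from by linear_combination j * htt]
  rw [show (τ * (τ * m + l) + j - i) = τ * (τ * m + l + τ' * j - τ' * i) from by
    linear_combination (i - j) * htt]
  rw [show (τ * (τ' * k - q + J (τ * m + l - k)) + (τ' * j + J (τ * (τ * m + l + τ' * j - τ' * i)))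
      - (τ' * i - τ * (q - J (τ * m + l - k)) + J (τ * (τ * m + l + τ' * j - τ' * i))))
      = k + τ' * j - τ' * i from by linear_combination k * htt]
  rw [show (τ * k + j - i) = τ * (k + τ' * j - τ' * i) from by linear_combination (i - j) * htt]
  rw [hJ1 (k + τ' * j - τ' * i), hJ1 (τ * m + l + τ' * j - τ' * i), hJ1 (τ * m + l - k)]
  simp only [Prod.mk.injEq]
  refine ⟨⟨?_, ?_⟩, ⟨?_, ?_⟩, ?_, ?_⟩
  · linear_combination j * htt
  · ring
  · ring
  · linear_combination (-(τ * J (k + τ' * j - τ' * i)) + (τ - 1) * J 0) * htt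
  · linear_combination (J (k + τ' * j - τ' * i) + q - J (τ * m + l + τ' * j - τ' * i)
      - J (τ * m + l - k)) * htt
  · linear_combination (J (k + τ' * j - τ' * i) - J (τ * m + l + τ' * j - τ' * i)) * htt


end SimpleYBAux

/-- the solutions of cardinality `n²` of Theorem `newexample2`:
`σ_{(i,j)}(k,l) = (tk + j, t(l − j_{tk+j−i}))` give indecomposable irretractable
solutions, which are simple under the extra invertibility hypotheses. -/
theorem simple_solution_n_squared (n : ℕ) (hn : 1 < n)
    (t : (ZMod n)ˣ) (J : ZMod n → ZMod n)
    (hsym : ∀ i : ZMod n, J (-i) = J i)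
    (hpow : ∀ (s : ℤ) (i : ZMod n),
      J ((t ^ s : (ZMod n)ˣ) * i) =
        (t ^ s : (ZMod n)ˣ) * J i - ((t ^ s : (ZMod n)ˣ) - 1) * J 0)
    (hstep : ∀ i : ZMod n, i ≠ 0 → ∃ k : ZMod n, IsUnit (J (i + k) - J k))
    (σ : ZMod n × ZMod n → ZMod n × ZMod n → ZMod n × ZMod n)
    (hσ : ∀ i j k l : ZMod n,
      σ (i, j) (k, l) = ((t : ZMod n) * k + j,
        (t : ZMod n) * (l - J ((t : ZMod n) * k + j - i))))
    (r : (ZMod n × ZMod n) × (ZMod n × ZMod n) → (ZMod n × ZMod n) × (ZMod n × ZMod n))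
    (hr : ∀ x y : ZMod n × ZMod n,
      (r (x, y)).1 = σ x y ∧ σ (σ x y) ((r (x, y)).2) = x) :
    (IsYBSolution r ∧ IsIndecomposable r ∧ IsIrretractable r) ∧
    ((∀ i : ZMod n, i ≠ 0 → IsUnit (J 0 - J i)) →
     (∀ i k : ZMod n, J i ≠ J k → IsUnit (J i - J k)) →
     IsSimpleSolution r) := by
  classical
  haveI hnz : NeZero n := ⟨by omega⟩
  haveI : Fact (1 < n) := ⟨hn⟩
  set τ : ZMod n := (t : ZMod n) with hτdef
  set τ' : ZMod n := ((t⁻¹ : (ZMod n)ˣ) : ZMod n) with hτ'def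
  have htt : τ * τ' = 1 := t.mul_inv
  have hτu : IsUnit τ := t.isUnit
  have hJ1 : ∀ a : ZMod n, J (τ * a) = τ * J a - (τ - 1) * J 0 := by
    intro a
    have h := hpow 1 a
    simpa using h
  have hsig : ∀ x y, σ x y = SimpleYBAux.sig τ J x y := by
    rintro ⟨i, j⟩ ⟨k, l⟩
    rw [hσ]
    rfl
  have hr1 : ∀ x y, (r (x, y)).1 = SimpleYBAux.sig τ J x y :=
    fun x y => (hr x y).1.trans (hsig x y)
  have hr2 : ∀ x y, SimpleYBAux.sig τ J (SimpleYBAux.sig τ J x y) ((r (x, y)).2) = x := by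
    intro x y
    have h := (hr x y).2
    rw [hsig, hsig] at h
    exact h
  have hperm : ∀ z, SimpleYBAux.sigPerm τ τ' J htt z ∈ permGroup r :=
    fun z => Subgroup.subset_closure ⟨z, fun y => (hr1 z y).symm⟩
  constructor
  · refine ⟨?_, ?_, ?_⟩
    · -- IsYBSolution
      refine ⟨SimpleYBAux.r_invol htt hr1 hr2, SimpleYBAux.r_sigma_bij htt hr1 hr2,
        SimpleYBAux.r_gamma_bij htt hr1 hr2 hsym, ?_⟩
      have hre : r = fun p => (SimpleYBAux.sig τ J p.1 p.2, SimpleYBAux.Gam τ τ' J p.1 p.2) := by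
        funext p
        exact (SimpleYBAux.r_eq htt hr1 hr2 p.1 p.2).trans
          (by rw [SimpleYBAux.gam_eq htt hsym])
      rw [hre]
      exact SimpleYBAux.braid_aux htt hJ1
    · -- indecomposable
      rintro ⟨k, l⟩ ⟨k', l'⟩
      obtain ⟨k₀, hk₀⟩ := hstep 1 one_ne_zero
      set g₀ : Equiv.Perm (ZMod n × ZMod n) :=
        (SimpleYBAux.sigPerm τ τ' J htt (-(1 + k₀ - τ * k), 0))⁻¹ *
          SimpleYBAux.sigPerm τ τ' J htt (-(k₀ - τ * k), 0) with hg₀def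
      have hg₀ : ∀ b, g₀ (k, b) = (k, b + (J (1 + k₀) - J k₀)) := by
        intro b
        rw [hg₀def, Equiv.Perm.mul_apply, SimpleYBAux.sigPerm_apply,
          SimpleYBAux.sigPerm_inv_apply, SimpleYBAux.shift_eval htt,
          show τ * k + (1 + k₀ - τ * k) = 1 + k₀ from by ring,
          show τ * k + (k₀ - τ * k) = k₀ from by ring]
      have hg₀N : ∀ N : ℕ, ∀ b, (g₀ ^ N) (k, b) = (k, b + N • (J (1 + k₀) - J k₀)) := by
        intro N
        induction N with
        | zero => intro b; simp
        | succ N ih =>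
            intro b
            rw [pow_succ, Equiv.Perm.mul_apply, hg₀, ih,
              show b + (J (1 + k₀) - J k₀) + N • (J (1 + k₀) - J k₀) =
                b + (N + 1) • (J (1 + k₀) - J k₀) from by rw [succ_nsmul]; ring]
      set l₀ : ZMod n := τ' * l' + J k' with hl₀def
      set N : ℕ := ((l₀ - l) * ↑hk₀.unit⁻¹).val with hNdef
      refine ⟨SimpleYBAux.sigPerm τ τ' J htt (0, k' - τ * k) * g₀ ^ N, ?_, ?_⟩
      · exact Subgroup.mul_mem _ (hperm _)
          (Subgroup.pow_mem _ (Subgroup.mul_mem _ (Subgroup.inv_mem _ (hperm _)) (hperm _)) N)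
      · rw [Equiv.Perm.mul_apply, hg₀N, SimpleYBAux.sigPerm_apply]
        rw [show l + N • (J (1 + k₀) - J k₀) = l₀ from by
          rw [hNdef, nsmul_eq_mul, ZMod.natCast_zmod_val,
            mul_assoc, SimpleYBAux.unit_inv_mul hk₀, mul_one]; ring]
        show SimpleYBAux.sig τ J (0, k' - τ * k) (k, l₀) = (k', l')
        simp only [SimpleYBAux.sig]
        rw [show τ * k + (k' - τ * k) = k' from by ring,
          show k' - (0 : ZMod n) = k' from by ring]
        refine Prod.ext rfl ?_
        show τ * (l₀ - J k') = l'
        rw [hl₀def]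
        linear_combination l' * htt
    · -- irretractable
      rintro ⟨i, j⟩ ⟨i', j'⟩ h
      have hs : ∀ z, SimpleYBAux.sig τ J (i, j) z = SimpleYBAux.sig τ J (i', j') z := by
        intro z
        rw [← hr1, ← hr1]
        exact h z
      have hj : j = j' := by
        have h0 := hs (0, 0)
        simp only [SimpleYBAux.sig, Prod.mk.injEq] at h0
        linear_combination h0.1
      subst hj
      have hJeq : ∀ a, J (a - i) = J (a - i') := by
        intro a
        have h0 := hs (τ' * (a - j), 0)
        simp only [SimpleYBAux.sig, Prod.mk.injEq] at h0
        rw [show τ * (τ' * (a - j)) + j - i = a - i from by linear_combination (a - j) * htt,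
          show τ * (τ' * (a - j)) + j - i' = a - i' from by
            linear_combination (a - j) * htt] at h0
        have h2 := h0.2
        have h3 := congrArg (fun x => τ' * x) h2
        rw [SimpleYBAux.tau_cancel htt, SimpleYBAux.tau_cancel htt] at h3
        linear_combination -h3
      have hi : i = i' := by
        by_contra hne
        obtain ⟨w, hw⟩ := SimpleYBAux.exists_Jdiff hstep hn
          (sub_ne_zero.mpr hne) (d := i - i')
        apply hw
        have := hJeq (w + i)
        rw [show w + i - i = w from by ring, show w + i - i' = w + (i - i') from by ring] at this
        exact this.symm
      rw [hi]
  · -- simplicity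
    intro hi₀ hii₀
    refine ⟨⟨((0 : ZMod n), (0 : ZMod n)), ((1 : ZMod n), (0 : ZMod n)),
      fun hcon => one_ne_zero (α := ZMod n) (congrArg Prod.fst hcon).symm⟩, ?_⟩
    intro Y s hs f hfsurj hfhom
    by_cases hinj : Function.Injective f
    · exact Or.inl ⟨hinj, hfsurj⟩
    right
    rw [Function.not_injective_iff] at hinj
    obtain ⟨x, x', hfx, hne⟩ := hinj
    set R : ZMod n × ZMod n → ZMod n × ZMod n → Prop := fun a b => f a = f b with hRdef
    have hRe : Equivalence R := ⟨fun _ => rfl, Eq.symm, Eq.trans⟩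
    have hsf : ∀ a b, f (SimpleYBAux.sig τ J a b) = (s (f a, f b)).1 := by
      intro a b
      rw [← hr1]
      exact hfhom a b
    have Ract : ∀ a a' z, R a a' → R (SimpleYBAux.sig τ J a z) (SimpleYBAux.sig τ J a' z) := by
      intro a a' z h
      show f _ = f _
      rw [hsf, hsf, h]
    have Rz : ∀ z a a', R a a' → R (SimpleYBAux.sig τ J z a) (SimpleYBAux.sig τ J z a') := by
      intro z a a' h
      show f _ = f _
      rw [hsf, hsf, h]
    have hsinj : ∀ w, Function.Injective (fun v => (s (w, v)).1) :=
      fun w => (hs.sigma_bij w).1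
    have Rzinv : ∀ z a a', R a a' →
        R (SimpleYBAux.sigInv τ' J z a) (SimpleYBAux.sigInv τ' J z a') := by
      intro z a a' h
      apply hsinj (f z)
      show (s (f z, f (SimpleYBAux.sigInv τ' J z a))).1 =
        (s (f z, f (SimpleYBAux.sigInv τ' J z a'))).1
      rw [← hsf, ← hsf, SimpleYBAux.sig_sigInv htt, SimpleYBAux.sig_sigInv htt]
      exact h
    have Rgam : ∀ z a a', R a a' →
        R (SimpleYBAux.sigInv τ' J (SimpleYBAux.sig τ J a z) a)
          (SimpleYBAux.sigInv τ' J (SimpleYBAux.sig τ J a' z) a') := by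
      intro z a a' h
      have hw : f (SimpleYBAux.sig τ J a z) = f (SimpleYBAux.sig τ J a' z) := Ract a a' z h
      apply hsinj (f (SimpleYBAux.sig τ J a z))
      show (s (f (SimpleYBAux.sig τ J a z),
        f (SimpleYBAux.sigInv τ' J (SimpleYBAux.sig τ J a z) a))).1 =
        (s (f (SimpleYBAux.sig τ J a z),
        f (SimpleYBAux.sigInv τ' J (SimpleYBAux.sig τ J a' z) a'))).1
      rw [← hsf, SimpleYBAux.sig_sigInv htt]
      conv_rhs => rw [hw, ← hsf, SimpleYBAux.sig_sigInv htt]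
      exact h
    have hSC := SimpleYBAux.step1 htt hsym hstep R Ract Rz Rzinv hn hτu hi₀ x x' hne hfx
    have hall := SimpleYBAux.step2 htt hsym hstep R hRe Rz Rzinv Rgam hn hτu hi₀ hSC
    refine ⟨fun y₁ y₂ => ?_⟩
    obtain ⟨p, rfl⟩ := hfsurj y₁
    obtain ⟨q, rfl⟩ := hfsurj y₂
    exact hall p q
end

section
/- Let n > 1 be an integer and let j₀,…,j_{n−1} ∈ ℤ/(n) (indices read modulo n) satisfy j_i = j_{−i} for all i ∈ ℤ/(n). Suppose that for every nonzero i ∈ ℤ/(n) there exists k ∈ ℤ/(n) such that j_{i+k} ≠ j_k, and that the subgroup of (ℤ/(n),+) generated by {j_i : i ∈ ℤ/(n)} is all of ℤ/(n). Define r : (ℤ/(n))² × (ℤ/(n))² → (ℤ/(n))² × (ℤ/(n))² by r((i,j),(k,l)) = (σ_{(i,j)}(k,l), σ_{σ_{(i,j)}(k,l)}⁻¹(i,j)), where σ_{(i,j)}(k,l) = (k + j, l − j_{k+j−i}). Then ((ℤ/(n))², r) is an indecomposable and irretractable solution of the YBE. If, moreover, j₀ − j_i is invertible in ℤ/(n)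 for every nonzero i ∈ ℤ/(n), then ((ℤ/(n))², r) is a simple solution of the YBE. -/
open Function

/-- Explicit inverse of the map `σ_z` of the concrete solution below. -/
def sInv {n : ℕ} (J : ZMod n → ZMod n) (z w : ZMod n × ZMod n) : ZMod n × ZMod n :=
  (w.1 - z.2, w.2 + J (w.1 - z.1))

/-- the `t = 1` version (Theorem `newexample2bis`):
`σ_{(i,j)}(k,l) = (k + j, l − j_{k+j−i})` gives an indecomposable irretractable
solution, which is simple when `j₀ − j_i` is invertible for all nonzero `i`. -/
theorem simple_solution_n_squared_t_one (n : ℕ) (hn : 1 < n)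
    (J : ZMod n → ZMod n)
    (hsym : ∀ i : ZMod n, J (-i) = J i)
    (hstep : ∀ i : ZMod n, i ≠ 0 → ∃ k : ZMod n, J (i + k) ≠ J k)
    (hgen : AddSubgroup.closure (Set.range J) = (⊤ : AddSubgroup (ZMod n)))
    (σ : ZMod n × ZMod n → ZMod n × ZMod n → ZMod n × ZMod n)
    (hσ : ∀ i j k l : ZMod n,
      σ (i, j) (k, l) = (k + j, l - J (k + j - i)))
    (r : (ZMod n × ZMod n) × (ZMod n × ZMod n) → (ZMod n × ZMod n) × (ZMod n × ZMod n))
    (hr : ∀ x y : ZMod n × ZMod n,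
      (r (x, y)).1 = σ x y ∧ σ (σ x y) ((r (x, y)).2) = x) :
    (IsYBSolution r ∧ IsIndecomposable r ∧ IsIrretractable r) ∧
    ((∀ i : ZMod n, i ≠ 0 → IsUnit (J 0 - J i)) → IsSimpleSolution r) := by
  haveI : NeZero n := ⟨by omega⟩
  haveI : Fact (1 < n) := ⟨hn⟩
  -- basic inverse lemmas
  have hinv1 : ∀ z w, σ z (sInv J z w) = w := by
    rintro ⟨a, b⟩ ⟨c, d⟩
    simp only [sInv, hσ, Prod.mk.injEq]
    constructor <;> ring_nf
  have hinv2 : ∀ z w, sInv J z (σ z w) = w := by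
    rintro ⟨a, b⟩ ⟨c, d⟩
    simp only [sInv, hσ, Prod.mk.injEq]
    constructor <;> ring_nf
  have hr1 : ∀ x y, (r (x, y)).1 = σ x y := fun x y => (hr x y).1
  have hr2 : ∀ x y, (r (x, y)).2 = sInv J (σ x y) x := by
    intro x y
    calc (r (x, y)).2 = sInv J (σ x y) (σ (σ x y) ((r (x, y)).2)) := (hinv2 _ _).symm
    _ = sInv J (σ x y) x := by rw [(hr x y).2]
  have hRF : ∀ i j k l : ZMod n, r ((i,j),(k,l)) =
      ((k + j, l - J (k + j - i)), (i - l + J (k + j - i), j + J (k + j - i))) := by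
    intro i j k l
    rw [show (r ((i,j),(k,l))) = ((r ((i,j),(k,l))).1, (r ((i,j),(k,l))).2) from rfl,
        hr1, hr2, hσ]
    simp only [sInv, hσ, Prod.mk.injEq]
    refine ⟨trivial, by ring, ?_⟩
    rw [show i - (k + j) = -(k + j - i) by ring, hsym]
  -- the permutations σ_z as elements of Equiv.Perm
  let π : ZMod n × ZMod n → Equiv.Perm (ZMod n × ZMod n) := fun z =>
    ⟨σ z, sInv J z, fun w => hinv2 z w, fun w => hinv1 z w⟩
  have hπmem : ∀ z, π z ∈ permGroup r :=
    fun z => Subgroup.subset_closure ⟨z, fun y => (hr1 z y).symm⟩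
  have hπ : ∀ z w, π z w = σ z w := fun z w => rfl
  have hπi : ∀ z w, (π z)⁻¹ w = sInv J z w := fun z w => rfl
  -- the YB solution structure
  have hYB : IsYBSolution r := by
    constructor
    · rintro ⟨x, y⟩
      show r (r (x, y)) = (x, y)
      rw [show (r (x,y)) = ((r (x,y)).1, (r (x,y)).2) from rfl, hr1, hr2]
      rw [show (r (σ x y, sInv J (σ x y) x)) =
        ((r (σ x y, sInv J (σ x y) x)).1, (r (σ x y, sInv J (σ x y) x)).2) from rfl,
        hr1, hr2, hinv1, hinv2]
    · intro x
      apply Function.bijective_iff_has_inverse.mpr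
      refine ⟨sInv J x, fun y => ?_, fun y => ?_⟩ <;> simp only [hr1]
      · exact hinv2 x y
      · exact hinv1 x y
    · rintro ⟨k, l⟩
      apply Function.bijective_iff_has_inverse.mpr
      refine ⟨fun w => (w.1 + l - J (k + w.2 - w.1 - l), w.2 - J (k + w.2 - w.1 - l)),
        ?_, ?_⟩
      · rintro ⟨i, j⟩
        simp only [hRF]
        rw [show k + (j + J (k + j - i)) - (i - l + J (k + j - i)) - l = k + j - i by ring]
        simp only [Prod.mk.injEq]
        constructor <;> ring
      · rintro ⟨p, q⟩
        simp only
        rw [hRF]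
        simp only [Prod.mk.injEq]
        constructor <;> ring_nf
    · funext p
      obtain ⟨⟨i, j⟩, ⟨k, l⟩, ⟨m, w⟩⟩ := p
      simp only [comp_apply, yb12, yb23, hRF, Prod.mk.injEq]
      refine ⟨⟨?_, ?_⟩, ⟨?_, ?_⟩, ?_, ?_⟩ <;> ring_nf
  -- indecomposability
  have hvert : ∀ a c : ZMod n, ∃ g ∈ permGroup r, ∀ l, g (a, l) = (a, l + c) := by
    intro a c
    have hc : c ∈ AddSubgroup.closure (Set.range J) := by rw [hgen]; trivial
    induction hc using AddSubgroup.closure_induction with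
    | mem t ht =>
      obtain ⟨u, rfl⟩ := ht
      refine ⟨(π (a - u, 0))⁻¹, inv_mem (hπmem _), fun l => ?_⟩
      rw [hπi]
      simp only [sInv]
      rw [show a - (a - u) = u by ring, sub_zero]
    | zero => exact ⟨1, one_mem _, fun l => by simp⟩
    | add s t _ _ ihs iht =>
      obtain ⟨g₁, hg₁m, hg₁⟩ := ihs
      obtain ⟨g₂, hg₂m, hg₂⟩ := iht
      refine ⟨g₁ * g₂, mul_mem hg₁m hg₂m, fun l => ?_⟩
      rw [Equiv.Perm.mul_apply, hg₂, hg₁, add_assoc, add_comm t s]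
    | neg s _ ihs =>
      obtain ⟨g, hgm, hg⟩ := ihs
      refine ⟨g⁻¹, inv_mem hgm, fun l => ?_⟩
      have h : g (a, l + -s) = (a, l) := by rw [hg, add_assoc]; simp
      rw [← h, Equiv.Perm.inv_def, Equiv.symm_apply_apply]
  have hindec : IsIndecomposable r := by
    rintro ⟨p, q⟩ ⟨a, b⟩
    obtain ⟨g₂, hg₂m, hg₂⟩ := hvert a (b - (q - J a))
    refine ⟨g₂ * π (0, a - p), mul_mem hg₂m (hπmem _), ?_⟩
    rw [Equiv.Perm.mul_apply, hπ, hσ,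
      show p + (a - p) = a by ring, sub_zero, hg₂,
      show q - J a + (b - (q - J a)) = b by ring]
  -- irretractability
  have hirr : IsIrretractable r := by
    rintro ⟨i, j⟩ ⟨i', j'⟩ h
    have h' : ∀ k l : ZMod n, ((k + j : ZMod n), l - J (k + j - i)) =
        (k + j', l - J (k + j' - i')) := by
      intro k l
      have := h (k, l)
      rwa [hr1, hr1, hσ, hσ] at this
    have hj : j = j' := by
      have := congrArg Prod.fst (h' 0 0)
      simpa using this
    subst hj
    have hi : i = i' := by
      by_contra hii
      have hne : i' - i ≠ 0 := sub_ne_zero.mpr fun hh => hii hh.symm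
      obtain ⟨k₀, hk₀⟩ := hstep (i' - i) hne
      have h2 := congrArg Prod.snd (h' (k₀ + i' - j) 0)
      simp only at h2
      rw [show k₀ + i' - j + j - i = i' - i + k₀ by ring,
          show k₀ + i' - j + j - i' = k₀ by ring] at h2
      exact hk₀ (by linear_combination -h2)
    exact Prod.ext hi rfl
  refine ⟨⟨hYB, hindec, hirr⟩, ?_⟩
  -- simplicity
  intro hU
  refine ⟨inferInstance, ?_⟩
  intro Y s hs f hfsurj hfhom
  by_cases hinj : Function.Injective f
  · exact Or.inl ⟨hinj, hfsurj⟩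
  right
  obtain ⟨x, x', hfe, hne⟩ := Function.not_injective_iff.mp hinj
  -- congruence lemmas
  have L1 : ∀ z y y', f y = f y' → f (σ z y) = f (σ z y') := by
    intro z y y' h
    have h1 := hfhom z y
    have h2 := hfhom z y'
    rw [hr1] at h1 h2
    rw [h1, h2, h]
  have L2 : ∀ z y y', f y = f y' → f (sInv J z y) = f (sInv J z y') := by
    intro z y y' h
    have e1 : (s (f z, f (sInv J z y))).1 = (s (f z, f (sInv J z y'))).1 := by
      rw [← hfhom z (sInv J z y), ← hfhom z (sInv J z y'), hr1, hr1, hinv1, hinv1, h]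
    exact (hs.sigma_bij (f z)).injective e1
  have L3 : ∀ x₁ x₂ y, f x₁ = f x₂ → f (σ x₁ y) = f (σ x₂ y) := by
    intro x₁ x₂ y h
    have h1 := hfhom x₁ y
    have h2 := hfhom x₂ y
    rw [hr1] at h1 h2
    rw [h1, h2, h]
  obtain ⟨i, j⟩ := x
  obtain ⟨i', j'⟩ := x'
  have hk0 : ∀ y, f (sInv J (i', j') (σ (i, j) y)) = f y := by
    intro y
    have h2 := L2 (i', j') _ _ (L3 _ _ y hfe)
    rwa [hinv2] at h2
  have hk0' : ∀ y, f (sInv J (i, j) (σ (i', j') y)) = f y := by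
    intro y
    have h2 := L2 (i, j) _ _ (L3 _ _ y hfe.symm)
    rwa [hinv2] at h2
  -- a column with a unit period
  have hcolunit : ∃ a₀ c : ZMod n, IsUnit c ∧ ∀ l, f (a₀, l + c) = f (a₀, l) := by
    by_cases hd : j = j'
    · -- vertical case: i ≠ i'
      subst hd
      have hii : i ≠ i' := fun h => hne (by rw [h])
      refine ⟨i - j, J (i - i') - J 0, ?_, fun l => ?_⟩
      · have := (hU (i - i') (sub_ne_zero.mpr hii)).neg
        simpa [neg_sub] using this
      · have key2 : sInv J (i', j) (σ (i, j) (i - j, l)) = (i - j, l + (J (i - i') - J 0)) := by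
          rw [hσ]
          simp only [sInv, Prod.mk.injEq]
          constructor <;> ring_nf
        rw [show l + (J (i - i') - J 0) = l + (J (i - i') - J 0) from rfl, ← key2]
        exact hk0 (i - j, l)
    · -- horizontal case: d = j - j' ≠ 0
      have hdne : j - j' ≠ 0 := sub_ne_zero.mpr hd
      refine ⟨0, J 0 - J (j - j'), hU _ hdne, fun l => ?_⟩
      set p : ZMod n := 0 - (j - j') with hp
      set u : ZMod n × ZMod n := sInv J (i, j) (σ (i', j') (0, l)) with hu
      have key : σ (p, 0) (sInv J (i', j') (σ (i, j) (sInv J (p, 0) u))) =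
          ((0 : ZMod n), l + (J 0 - J (j - j'))) := by
        rw [hu, hp]
        simp only [hσ, sInv, Prod.mk.injEq]
        constructor <;> ring_nf
      have hfu : f u = f (0, l) := hk0' (0, l)
      have hfw := L1 (p, 0) _ _ (hk0 (sInv J (p, 0) u))
      rw [hinv1, key] at hfw
      rw [hfw, hfu]
  -- collapse the column a₀, then every column, then everything
  obtain ⟨a₀, c, hcu, hper⟩ := hcolunit
  have hiter : ∀ t : ℕ, ∀ l, f (a₀, l + (t : ZMod n) * c) = f (a₀, l) := by
    intro t
    induction t with
    | zero => simp
    | succ t ih =>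
      intro l
      rw [show l + ((t + 1 : ℕ) : ZMod n) * c = (l + c) + (t : ZMod n) * c by push_cast; ring,
        ih (l + c), hper l]
  have hcol0 : ∀ l l', f (a₀, l) = f (a₀, l') := by
    intro l l'
    obtain ⟨uc, huc⟩ := hcu
    have hval : (((((l - l') * (↑uc⁻¹ : ZMod n)).val : ℕ)) : ZMod n) = (l - l') * ↑uc⁻¹ := by
      simp [ZMod.natCast_val, ZMod.cast_id]
    have := hiter (((l - l') * (↑uc⁻¹ : ZMod n)).val) l'
    rw [hval] at this
    rw [show (l - l') * (↑uc⁻¹ : ZMod n) * c = l - l' by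
      rw [← huc, mul_assoc, Units.inv_mul, mul_one]] at this
    rw [show l' + (l - l') = l by ring] at this
    exact this
  have hcolall : ∀ a l l', f (a, l) = f (a, l') := by
    intro a l l'
    have h1 : σ (0, a - a₀) (a₀, l + J a) = (a, l) := by
      rw [hσ]
      simp only [Prod.mk.injEq]
      constructor <;> ring_nf
    have h2 : σ (0, a - a₀) (a₀, l' + J a) = (a, l') := by
      rw [hσ]
      simp only [Prod.mk.injEq]
      constructor <;> ring_nf
    have := L1 (0, a - a₀) (a₀, l + J a) (a₀, l' + J a) (hcol0 _ _)
    rwa [h1, h2] at this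
  have hall : ∀ z z' : ZMod n × ZMod n, f z = f z' := by
    rintro ⟨k, l⟩ ⟨k', l'⟩
    have e1 : σ (0, 0) (k, l + J k) = (k, l) := by
      rw [hσ]
      simp only [Prod.mk.injEq]
      constructor <;> ring_nf
    have e2 : σ (0, k' - k) (k, l + J k) = (k', l + J k - J k') := by
      rw [hσ]
      simp only [Prod.mk.injEq]
      constructor <;> ring_nf
    have h3 := L3 (0, 0) (0, k' - k) (k, l + J k) (hcolall 0 0 (k' - k))
    rw [e1, e2] at h3
    exact h3.trans (hcolall k' _ l')
  refine ⟨fun y₁ y₂ => ?_⟩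
  obtain ⟨z₁, rfl⟩ := hfsurj y₁
  obtain ⟨z₂, rfl⟩ := hfsurj y₂
  exact hall z₁ z₂
end

section
/- Let p be a prime number, let t ∈ ℤ/(p) be nonzero, and let j₀,…,j_{p−1} ∈ ℤ/(p) (indices read modulo p) satisfy j_i = j_{−i} for all i and j_{tˢi} = tˢ j_i − (tˢ − 1) j₀ for all i ∈ ℤ/(p) and all s ∈ ℤ. Suppose j_i ≠ j_k for some i ≠ k. Define r : (ℤ/(p))² × (ℤ/(p))² → (ℤ/(p))² × (ℤ/(p))² by r((i,j),(k,l)) = (σ_{(i,j)}(k,l), σ_{σ_{(i,j)}(k,l)}⁻¹(i,j)), where σ_{(i,j)}(k,l) = (tk + j, t(l − j_{tk+j−i})). Then ((ℤ/(p))², r) is a simple solution of the YBE. -/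
open Function

namespace SimpleAux

theorem pair_eq {α β : Type*} {a c : α} {b d : β} (h1 : a = c) (h2 : b = d) :
    (a, b) = (c, d) := by subst h1; subst h2; rfl

theorem periodic {p : ℕ} [Fact p.Prime] {Y : Type*} (g : ZMod p → Y) {c : ZMod p} (hc : c ≠ 0)
    (hg : ∀ v, g (v + c) = g v) : ∀ a b, g a = g b := by
  haveI : NeZero p := ⟨(Fact.out : p.Prime).ne_zero⟩
  have key : ∀ (n : ℕ) (a : ZMod p), g (a + (n : ZMod p) * c) = g a := by
    intro n
    induction n with
    | zero => intro a; simp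
    | succ m ih =>
        intro a
        have h : a + ((m + 1 : ℕ) : ZMod p) * c = (a + (m : ZMod p) * c) + c := by
          push_cast; ring
        rw [h, hg, ih]
  intro a b
  have hb : b = a + (((b - a) * c⁻¹).val : ZMod p) * c := by
    rw [ZMod.natCast_rightInverse ((b - a) * c⁻¹)]
    field_simp
    ring
  rw [hb, key]

/-- The explicit sigma map. -/
def Sf {p : ℕ} (t : ZMod p) (J : ZMod p → ZMod p) (x y : ZMod p × ZMod p) : ZMod p × ZMod p :=
  (t * y.1 + x.2, t * (y.2 - J (t * y.1 + x.2 - x.1)))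

/-- The explicit gamma map: `(r (x, y)).2 = Gf t J x y`. -/
def Gf {p : ℕ} (t : ZMod p) (J : ZMod p → ZMod p) (x y : ZMod p × ZMod p) : ZMod p × ZMod p :=
  (t⁻¹ * x.1 - y.2 + J (x.1 - x.2 - t * y.1), t⁻¹ * x.2 + J (x.1 - x.2 - t * y.1))

section Algebra

variable {p : ℕ} [Fact p.Prime] {t : ZMod p} {J : ZMod p → ZMod p}

theorem Sf_inj (ht : t ≠ 0) (x : ZMod p × ZMod p) : Function.Injective (Sf t J x) := by
  rintro ⟨u, v⟩ ⟨u', v'⟩ h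
  simp only [Sf, Prod.mk.injEq] at h
  obtain ⟨h1, h2⟩ := h
  have hu : u = u' := mul_left_cancel₀ ht (by linear_combination h1)
  subst hu
  have hv : v = v' := by
    have := mul_left_cancel₀ ht h2
    linear_combination this
  subst hv; rfl

theorem Sf_nf (hsym : ∀ i : ZMod p, J (-i) = J i) (i j k l : ZMod p) :
    Sf t J (i, j) (k, l) = (t * k + j, t * l - t * J (i - j - t * k)) := by
  dsimp only [Sf]
  refine pair_eq rfl ?_
  rw [show t * k + j - i = -(i - j - t * k) by ring, hsym]
  ring

theorem Gf_nf (i j k l : ZMod p) :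
    Gf t J (i, j) (k, l) = (t⁻¹ * i - l + J (i - j - t * k), t⁻¹ * j + J (i - j - t * k)) := rfl

theorem Sf_bij (ht : t ≠ 0) (x : ZMod p × ZMod p) : Function.Bijective (Sf t J x) := by
  have key := mul_inv_cancel₀ ht
  have key2 := inv_mul_cancel₀ ht
  rw [Function.bijective_iff_has_inverse]
  refine ⟨fun y => (t⁻¹ * (y.1 - x.2), t⁻¹ * y.2 + J (y.1 - x.1)), fun z => ?_, fun y => ?_⟩
  · obtain ⟨z1, z2⟩ := z
    dsimp only [Sf]
    refine pair_eq ?_ ?_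
    · linear_combination z1 * key2
    · linear_combination (z2 - J (t * z1 + x.2 - x.1)) * key2
  · obtain ⟨y1, y2⟩ := y
    dsimp only [Sf]
    refine pair_eq ?_ ?_
    · linear_combination (y1 - x.2) * key
    · rw [show t * (t⁻¹ * (y1 - x.2)) + x.2 - x.1
            = (t * t⁻¹) * (y1 - x.2) + x.2 - x.1 by ring, key,
          show (1 : ZMod p) * (y1 - x.2) + x.2 - x.1 = y1 - x.1 by ring]
      linear_combination y2 * key

theorem Gf_bij (ht : t ≠ 0) (y : ZMod p × ZMod p) :
    Function.Bijective (fun x => Gf t J x y) := by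
  have key := mul_inv_cancel₀ ht
  have key2 := inv_mul_cancel₀ ht
  rw [Function.bijective_iff_has_inverse]
  refine ⟨fun z => (t * (z.1 - z.2 + y.2) + t * (z.2 - J (t * (z.1 - z.2 + y.2) - t * y.1)),
      t * (z.2 - J (t * (z.1 - z.2 + y.2) - t * y.1))), fun x => ?_, fun z => ?_⟩
  · obtain ⟨x1, x2⟩ := x
    dsimp only [Gf]
    rw [show t * (t⁻¹ * x1 - y.2 + J (x1 - x2 - t * y.1) -
          (t⁻¹ * x2 + J (x1 - x2 - t * y.1)) + y.2) - t * y.1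
        = x1 - x2 - t * y.1 from by linear_combination (x1 - x2) * key]
    refine pair_eq ?_ ?_
    · linear_combination x1 * key
    · linear_combination x2 * key
  · obtain ⟨z1, z2⟩ := z
    dsimp only [Gf]
    rw [show t * (z1 - z2 + y.2) + t * (z2 - J (t * (z1 - z2 + y.2) - t * y.1)) -
          t * (z2 - J (t * (z1 - z2 + y.2) - t * y.1)) - t * y.1
        = t * (z1 - z2 + y.2) - t * y.1 from by ring]
    refine pair_eq ?_ ?_
    · linear_combination (z1 - z2 + y.2 + z2 - J (t * (z1 - z2 + y.2) - t * y.1)) * key2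
    · linear_combination (z2 - J (t * (z1 - z2 + y.2) - t * y.1)) * key2

theorem SfGf (ht : t ≠ 0) (hsym : ∀ i : ZMod p, J (-i) = J i) (x y : ZMod p × ZMod p) :
    Sf t J (Sf t J x y) (Gf t J x y) = x := by
  obtain ⟨i, j⟩ := x; obtain ⟨k, l⟩ := y
  have key := mul_inv_cancel₀ ht
  rw [Sf_nf hsym, Gf_nf, Sf_nf hsym]
  rw [show t * k + j - (t * l - t * J (i - j - t * k)) - t * (t⁻¹ * i - l + J (i - j - t * k))
        = (1 - t * t⁻¹) * i + (i - j - t * k) * (-1) from by ring, key,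
      show (1 - (1:ZMod p)) * i + (i - j - t * k) * (-1) = -(i - j - t*k) from by ring, hsym]
  refine pair_eq ?_ ?_
  · linear_combination i * key
  · linear_combination j * key

theorem GfSf (ht : t ≠ 0) (hsym : ∀ i : ZMod p, J (-i) = J i) (x y : ZMod p × ZMod p) :
    Gf t J (Sf t J x y) (Gf t J x y) = y := by
  obtain ⟨i, j⟩ := x; obtain ⟨k, l⟩ := y
  have key := mul_inv_cancel₀ ht
  have key2 := inv_mul_cancel₀ ht
  rw [Sf_nf hsym, Gf_nf, Gf_nf]
  rw [show t * k + j - (t * l - t * J (i - j - t * k)) - t * (t⁻¹ * i - l + J (i - j - t * k))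
        = (1 - t * t⁻¹) * i + (i - j - t * k) * (-1) from by ring, key,
      show (1 - (1:ZMod p)) * i + (i - j - t * k) * (-1) = -(i - j - t*k) from by ring, hsym]
  refine pair_eq ?_ ?_
  · linear_combination k * key2
  · linear_combination (l - J (i - j - t * k)) * key2

end Algebra

section Braid

variable {p : ℕ} [Fact p.Prime] {t : ZMod p} {J : ZMod p → ZMod p}
variable (ht : t ≠ 0) (hsym : ∀ i : ZMod p, J (-i) = J i)
variable (hJt : ∀ a, J (t * a) = t * J a - (t - 1) * J 0)
variable (hJit : ∀ a, J (t⁻¹ * a) = t⁻¹ * J a - (t⁻¹ - 1) * J 0)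

include ht hsym hJit in
theorem hsgz (i j k l m n : ZMod p) :
    Sf t J (Gf t J (i, j) (k, l)) (m, n)
      = (t * m + (t⁻¹ * j + J (i - j - t * k)),
         t * n - J (i - j - t * l - t * (t * m)) + (1 - t) * J 0) := by
  have key := mul_inv_cancel₀ ht
  have key2 := inv_mul_cancel₀ ht
  rw [Gf_nf, Sf_nf hsym]
  refine pair_eq rfl ?_
  rw [show (t⁻¹ * i - l + J (i - j - t * k)) - (t⁻¹ * j + J (i - j - t * k)) - t * m
        = t⁻¹ * (i - j - t * l - t * (t * m)) from by linear_combination (l + t * m) * key2,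
      hJit]
  linear_combination (J 0 - J (i - j - t * l - t * (t * m))) * key

include hsym in
theorem hGxSyz (i j k l m n : ZMod p) :
    Gf t J (i, j) (Sf t J (k, l) (m, n))
      = (t⁻¹ * i - (t * n - t * J (k - l - t * m)) + J (i - j - t * l - t * (t * m)),
         t⁻¹ * j + J (i - j - t * l - t * (t * m))) := by
  rw [Sf_nf hsym, Gf_nf,
      show i - j - t * (t * m + l) = i - j - t * l - t * (t * m) by ring]

include ht hsym hJt hJit in
theorem braidA (i j k l m n : ZMod p) :
    Sf t J (Sf t J (i, j) (k, l)) (Sf t J (Gf t J (i, j) (k, l)) (m, n))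
      = Sf t J (i, j) (Sf t J (k, l) (m, n)) := by
  have key := mul_inv_cancel₀ ht
  rw [hsgz ht hsym hJit]
  simp only [Sf_nf hsym]
  rw [show t * k + j - (t * l - t * J (i - j - t * k))
        - t * (t * m + (t⁻¹ * j + J (i - j - t * k)))
        = t * (k - l - t * m) from by linear_combination (-j) * key,
      hJt,
      show i - j - t * (t * m + l) = i - j - t * l - t * (t * m) by ring]
  refine pair_eq ?_ ?_
  · linear_combination j * key
  · ring

include ht hsym hJt hJit in
theorem braidB (i j k l m n : ZMod p) :
    Gf t J (Sf t J (i, j) (k, l)) (Sf t J (Gf t J (i, j) (k, l)) (m, n))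
      = Sf t J (Gf t J (i, j) (Sf t J (k, l) (m, n))) (Gf t J (k, l) (m, n)) := by
  have key := mul_inv_cancel₀ ht
  rw [hsgz ht hsym hJit, hGxSyz hsym]
  simp only [Sf_nf hsym, Gf_nf]
  rw [show t * k + j - (t * l - t * J (i - j - t * k))
        - t * (t * m + (t⁻¹ * j + J (i - j - t * k)))
        = t * (k - l - t * m) from by linear_combination (-j) * key,
      hJt,
      show t⁻¹ * i - (t * n - t * J (k - l - t * m)) + J (i - j - t * l - t * (t * m))
          - (t⁻¹ * j + J (i - j - t * l - t * (t * m))) - t * (t⁻¹ * k - n + J (k - l - t * m))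
        = t⁻¹ * (i - j - t * k) from by ring,
      hJit]
  refine pair_eq ?_ ?_
  · ring
  · linear_combination (-(J 0)) * key

include ht hsym hJit in
theorem braidC (i j k l m n : ZMod p) :
    Gf t J (Gf t J (i, j) (k, l)) (m, n)
      = Gf t J (Gf t J (i, j) (Sf t J (k, l) (m, n))) (Gf t J (k, l) (m, n)) := by
  have key := mul_inv_cancel₀ ht
  have key2 := inv_mul_cancel₀ ht
  rw [hGxSyz hsym]
  simp only [Gf_nf]
  rw [show t⁻¹ * i - l + J (i - j - t * k) - (t⁻¹ * j + J (i - j - t * k)) - t * m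
        = t⁻¹ * (i - j - t * l - t * (t * m)) from by linear_combination (l + t * m) * key2,
      hJit,
      show t⁻¹ * i - (t * n - t * J (k - l - t * m)) + J (i - j - t * l - t * (t * m))
          - (t⁻¹ * j + J (i - j - t * l - t * (t * m))) - t * (t⁻¹ * k - n + J (k - l - t * m))
        = t⁻¹ * (i - j - t * k) from by ring,
      hJit]
  refine pair_eq ?_ ?_
  · linear_combination (n - J (k - l - t * m)) * key2
  · ring

end Braid

section Congruence

variable {p : ℕ} [Fact p.Prime] {t : ZMod p} {J : ZMod p → ZMod p} {Y : Type*}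
variable {f : ZMod p × ZMod p → Y}

theorem zmod2_ne_zero : ∀ a : ZMod 2, a ≠ 0 → a = 1 := by decide
theorem zmod2_ne : ∀ a b : ZMod 2, a ≠ b → b = a + 1 := by decide

theorem total_of_column (ht : t ≠ 0)
    (H1 : ∀ w z z', f z = f z' → f (Sf t J w z) = f (Sf t J w z'))
    (H2 : ∀ x x' z, f x = f x' → f (Sf t J x z) = f (Sf t J x' z))
    {u₀ : ZMod p} (hcol : ∀ v v', f (u₀, v) = f (u₀, v')) :
    ∀ z z', f z = f z' := by
  have key := mul_inv_cancel₀ ht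
  have stepA : ∀ c v v', f (c, v) = f (c, v') := by
    intro c v v'
    have h1 : Sf t J (0, c - t * u₀)
        (u₀, t⁻¹ * (v + t * J (t * u₀ + (c - t * u₀) - 0))) = (c, v) := by
      dsimp only [Sf]
      exact pair_eq (by ring)
        (by linear_combination (v + t * J (t * u₀ + (c - t * u₀) - 0)) * key)
    have h2 : Sf t J (0, c - t * u₀)
        (u₀, t⁻¹ * (v' + t * J (t * u₀ + (c - t * u₀) - 0))) = (c, v') := by
      dsimp only [Sf]
      exact pair_eq (by ring)
        (by linear_combination (v' + t * J (t * u₀ + (c - t * u₀) - 0)) * key)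
    have h := H1 (0, c - t * u₀) _ _ (hcol (t⁻¹ * (v + t * J (t * u₀ + (c - t * u₀) - 0)))
        (t⁻¹ * (v' + t * J (t * u₀ + (c - t * u₀) - 0))))
    rw [h1, h2] at h
    exact h
  have hnb : ∀ c : ZMod p, f (c + 1, (0:ZMod p)) = f (c, 0) := by
    intro c
    have h := H2 (0, 0) (0, 1) (t⁻¹ * c, 0) (stepA 0 0 1)
    have e1 : Sf t J ((0:ZMod p), (0:ZMod p)) (t⁻¹ * c, 0)
        = (c, t * (0 - J (t * (t⁻¹ * c) + 0 - 0))) := by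
      dsimp only [Sf]
      exact pair_eq (by linear_combination c * key) rfl
    have e2 : Sf t J ((0:ZMod p), (1:ZMod p)) (t⁻¹ * c, 0)
        = (c + 1, t * (0 - J (t * (t⁻¹ * c) + 1 - 0))) := by
      dsimp only [Sf]
      exact pair_eq (by linear_combination c * key) rfl
    rw [e1, e2] at h
    calc f (c + 1, (0:ZMod p)) = f (c + 1, t * (0 - J (t * (t⁻¹ * c) + 1 - 0))) := stepA _ _ _
      _ = f (c, t * (0 - J (t * (t⁻¹ * c) + 0 - 0))) := h.symm
      _ = f (c, 0) := stepA _ _ _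
  have hrow := periodic (fun a => f (a, (0:ZMod p))) one_ne_zero hnb
  intro z z'
  obtain ⟨z1, z2⟩ := z; obtain ⟨w1, w2⟩ := z'
  calc f (z1, z2) = f (z1, 0) := stepA z1 z2 0
    _ = f (w1, 0) := hrow z1 w1
    _ = f (w1, w2) := stepA w1 0 w2

theorem Prel (ht : t ≠ 0)
    (H2 : ∀ x x' z, f x = f x' → f (Sf t J x z) = f (Sf t J x' z))
    (i j i' j' : ZMod p) (hf : f (i, j) = f (i', j')) :
    ∀ u v, f (u, v) = f (u + (j' - j),
      v + (t * J (u - i) - t * J (u + (j' - j) - i'))) := by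
  intro u v
  have key := mul_inv_cancel₀ ht
  have h1 : Sf t J (i, j) (t⁻¹ * (u - j), t⁻¹ * v + J (u - i)) = (u, v) := by
    dsimp only [Sf]
    refine pair_eq (by linear_combination (u - j) * key) ?_
    rw [show t * (t⁻¹ * (u - j)) + j - i = (t * t⁻¹) * (u - j) + j - i by ring, key,
        show (1 : ZMod p) * (u - j) + j - i = u - i by ring]
    linear_combination v * key
  have h2 : Sf t J (i', j') (t⁻¹ * (u - j), t⁻¹ * v + J (u - i))
      = (u + (j' - j), v + (t * J (u - i) - t * J (u + (j' - j) - i'))) := by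
    dsimp only [Sf]
    refine pair_eq (by linear_combination (u - j) * key) ?_
    rw [show t * (t⁻¹ * (u - j)) + j' - i' = (t * t⁻¹) * (u - j) + j' - i' by ring, key,
        show (1 : ZMod p) * (u - j) + j' - i' = u + (j' - j) - i' by ring]
    linear_combination v * key
  rw [← h1, ← h2]
  exact H2 _ _ _ hf

theorem lemB (ht : t ≠ 0) (hne : ∃ a b : ZMod p, a ≠ b ∧ J a ≠ J b)
    (H1 : ∀ w z z', f z = f z' → f (Sf t J w z) = f (Sf t J w z'))
    (H2 : ∀ x x' z, f x = f x' → f (Sf t J x z) = f (Sf t J x' z))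
    (a a' b : ZMod p) (hne' : a ≠ a') (hfab : f (a, b) = f (a', b)) :
    ∀ z z', f z = f z' := by
  have P := Prel ht H2 a b a' b hfab
  have P' : ∀ u v, f (u, v) = f (u, v + (t * J (u - a) - t * J (u - a'))) := by
    intro u v
    have h := P u v
    have e : (u + (b - b), v + (t * J (u - a) - t * J (u + (b - b) - a')))
        = (u, v + (t * J (u - a) - t * J (u - a'))) :=
      pair_eq (by ring) (by rw [show u + (b - b) - a' = u - a' by ring])
    rw [e] at h
    exact h
  by_cases hz : ∀ u, t * J (u - a) - t * J (u - a') = 0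
  · exfalso
    have hJ : ∀ v, J (v + (a - a')) = J v := by
      intro v
      have h := hz (v + a)
      rw [show v + a - a = v by ring, show v + a - a' = v + (a - a') by ring] at h
      have h2 : t * (J (v + (a - a')) - J v) = 0 := by linear_combination -h
      exact sub_eq_zero.mp ((mul_eq_zero.mp h2).resolve_left ht)
    obtain ⟨x0, y0, _, hJne⟩ := hne
    exact hJne (periodic J (sub_ne_zero.mpr hne') hJ x0 y0)
  · push_neg at hz
    obtain ⟨u₀, hu₀⟩ := hz
    exact total_of_column ht H1 H2
      (periodic (fun v => f (u₀, v)) hu₀ (fun v => (P' u₀ v).symm))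

theorem main_total (ht : t ≠ 0) (hsym : ∀ i : ZMod p, J (-i) = J i)
    (hne : ∃ a b : ZMod p, a ≠ b ∧ J a ≠ J b)
    (H1 : ∀ w z z', f z = f z' → f (Sf t J w z) = f (Sf t J w z'))
    (H2 : ∀ x x' z, f x = f x' → f (Sf t J x z) = f (Sf t J x' z))
    (H4 : ∀ x x' z, f x = f x' → f (Gf t J z x) = f (Gf t J z x'))
    {x x' : ZMod p × ZMod p} (hxx : x ≠ x') (hfx : f x = f x') :
    ∀ z z', f z = f z' := by
  obtain ⟨i, j⟩ := x; obtain ⟨i', j'⟩ := x'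
  have key := mul_inv_cancel₀ ht
  by_cases hj : j' = j
  · subst hj
    have hii : i ≠ i' := fun h => hxx (by rw [h])
    exact lemB ht hne H1 H2 i i' j' hii hfx
  · have hε : j' - j ≠ 0 := sub_ne_zero.mpr hj
    have P := Prel ht H2 i j i' j' hfx
    by_cases hz : ∃ u₀, t * J (u₀ - i) - t * J (u₀ + (j' - j) - i') = 0
    · obtain ⟨u₀, hu₀⟩ := hz
      have h := P u₀ 0
      rw [hu₀] at h
      have e : (u₀ + (j' - j), (0 : ZMod p) + 0) = (u₀ + (j' - j), (0:ZMod p)) :=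
        pair_eq rfl (by ring)
      rw [e] at h
      have hneq : u₀ ≠ u₀ + (j' - j) := by
        intro hcontra
        exact hε (by linear_combination -hcontra)
      exact lemB ht hne H1 H2 u₀ (u₀ + (j' - j)) 0 hneq h
    · push_neg at hz
      have Q : ∀ (w₁ u v : ZMod p), f (u, v) = f (u + t * (j' - j),
          v + (t * (t * J (t⁻¹ * u - i) - t * J (t⁻¹ * u + (j' - j) - i'))
             + (t * J (u - w₁) - t * J (u + t * (j' - j) - w₁)))) := by
        intro w₁ u v
        have h1 : Sf t J (w₁, 0) (t⁻¹ * u, t⁻¹ * v + J (u - w₁)) = (u, v) := by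
          dsimp only [Sf]
          refine pair_eq (by linear_combination u * key) ?_
          rw [show t * (t⁻¹ * u) + 0 - w₁ = (t * t⁻¹) * u - w₁ by ring, key,
              show (1 : ZMod p) * u - w₁ = u - w₁ by ring]
          linear_combination v * key
        have hP := P (t⁻¹ * u) (t⁻¹ * v + J (u - w₁))
        have h2 : Sf t J (w₁, 0) (t⁻¹ * u + (j' - j),
            t⁻¹ * v + J (u - w₁) + (t * J (t⁻¹ * u - i) - t * J (t⁻¹ * u + (j' - j) - i')))
            = (u + t * (j' - j),
          v + (t * (t * J (t⁻¹ * u - i) - t * J (t⁻¹ * u + (j' - j) - i'))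
             + (t * J (u - w₁) - t * J (u + t * (j' - j) - w₁)))) := by
          dsimp only [Sf]
          refine pair_eq (by linear_combination u * key) ?_
          rw [show t * (t⁻¹ * u + (j' - j)) + 0 - w₁
                = (t * t⁻¹) * u + t * (j' - j) - w₁ by ring, key,
              show (1 : ZMod p) * u + t * (j' - j) - w₁ = u + t * (j' - j) - w₁ by ring]
          linear_combination v * key
        rw [← h1, ← h2]
        exact H1 _ _ _ hP
      have D : ∀ (w₁ w₁' u v : ZMod p), f (u, v) = f (u,
          v + ((t * J (u - w₁) - t * J (u + t * (j' - j) - w₁))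
             - (t * J (u - w₁') - t * J (u + t * (j' - j) - w₁')))) := by
        intro w₁ w₁' u v
        have q1 := Q w₁ u v
        have q2 := Q w₁' u (v + ((t * J (u - w₁) - t * J (u + t * (j' - j) - w₁))
             - (t * J (u - w₁') - t * J (u + t * (j' - j) - w₁'))))
        have e : (u + t * (j' - j),
            v + ((t * J (u - w₁) - t * J (u + t * (j' - j) - w₁))
               - (t * J (u - w₁') - t * J (u + t * (j' - j) - w₁')))
              + (t * (t * J (t⁻¹ * u - i) - t * J (t⁻¹ * u + (j' - j) - i'))
             + (t * J (u - w₁') - t * J (u + t * (j' - j) - w₁'))))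
            = (u + t * (j' - j),
            v + (t * (t * J (t⁻¹ * u - i) - t * J (t⁻¹ * u + (j' - j) - i'))
             + (t * J (u - w₁) - t * J (u + t * (j' - j) - w₁)))) := pair_eq rfl (by ring)
        rw [e] at q2
        exact q1.trans q2.symm
      by_cases hD : ∃ w₁ w₁' u₀ : ZMod p,
          ((t * J (u₀ - w₁) - t * J (u₀ + t * (j' - j) - w₁))
             - (t * J (u₀ - w₁') - t * J (u₀ + t * (j' - j) - w₁'))) ≠ 0
      · obtain ⟨w₁, w₁', u₀, hc⟩ := hD
        exact total_of_column ht H1 H2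
          (periodic (fun v => f (u₀, v)) hc (fun v => (D w₁ w₁' u₀ v).symm))
      · push_neg at hD
        have hF : ∀ a : ZMod p, J a - J (a + t * (j' - j)) = J 0 - J (t * (j' - j)) := by
          intro a
          have h := hD (-a) 0 0
          rw [show (0 : ZMod p) - -a = a by ring,
              show (0 : ZMod p) + t * (j' - j) - -a = a + t * (j' - j) by ring,
              show (0 : ZMod p) - 0 = 0 by ring,
              show (0 : ZMod p) + t * (j' - j) - 0 = t * (j' - j) by ring] at h
          have h2 : t * ((J a - J (a + t * (j' - j))) - (J 0 - J (t * (j' - j)))) = 0 := by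
            linear_combination h
          exact sub_eq_zero.mp ((mul_eq_zero.mp h2).resolve_left ht)
        by_cases hc0 : J 0 - J (t * (j' - j)) = 0
        · exfalso
          have hper : ∀ v, J (v + t * (j' - j)) = J v := by
            intro v
            have h := hF v
            rw [hc0] at h
            exact (sub_eq_zero.mp h).symm
          obtain ⟨a, b, _, hJab⟩ := hne
          exact hJab (periodic J (mul_ne_zero ht hε) hper a b)
        · have h2c := hF (-(t * (j' - j)))
          rw [show -(t * (j' - j)) + t * (j' - j) = 0 by ring, hsym] at h2c
          have h2 : (2 : ZMod p) * (J 0 - J (t * (j' - j))) = 0 := by linear_combination -h2c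
          have h20 : (2 : ZMod p) = 0 := (mul_eq_zero.mp h2).resolve_right hc0
          have hp2 : p = 2 := by
            have hnat : ((2 : ℕ) : ZMod p) = 0 := by exact_mod_cast h20
            have hdvd : p ∣ 2 := (ZMod.natCast_eq_zero_iff 2 p).mp hnat
            exact (Nat.prime_dvd_prime_iff_eq Fact.out Nat.prime_two).mp hdvd
          subst hp2
          have hε1 : j' - j = 1 := zmod2_ne_zero _ hε
          have hii : i = i' := by
            by_contra hii
            have hi' : i' = i + 1 := zmod2_ne _ _ hii
            exact hz i (by rw [hε1, hi', show i + 1 - (i + 1) = i - i from by ring]; ring)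
          have hγ := H4 (i, j) (i', j') (0, 0) hfx
          rw [← hii] at hγ
          dsimp only [Gf] at hγ
          refine lemB ht hne H1 H2 _ _ _ ?_ hγ
          intro hcontra
          exact hj (by linear_combination hcontra)

end Congruence

end SimpleAux

/-- simple solutions of cardinality `p²` (Theorem `newexample`):
with `t ≠ 0` in `ℤ/(p)` and `j_i` satisfying the symmetry and scaling conditions
and not all equal, `σ_{(i,j)}(k,l) = (tk + j, t(l − j_{tk+j−i}))` defines a
simple solution of the YBE. -/


theorem simple_solution_p_squared (p : ℕ) [Fact p.Prime]
    (t : ZMod p) (ht : t ≠ 0) (J : ZMod p → ZMod p)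
    (hsym : ∀ i : ZMod p, J (-i) = J i)
    (hpow : ∀ (s : ℤ) (i : ZMod p),
      J (t ^ s * i) = t ^ s * J i - (t ^ s - 1) * J 0)
    (hne : ∃ i k : ZMod p, i ≠ k ∧ J i ≠ J k)
    (σ : ZMod p × ZMod p → ZMod p × ZMod p → ZMod p × ZMod p)
    (hσ : ∀ i j k l : ZMod p,
      σ (i, j) (k, l) = (t * k + j, t * (l - J (t * k + j - i))))
    (r : (ZMod p × ZMod p) × (ZMod p × ZMod p) → (ZMod p × ZMod p) × (ZMod p × ZMod p))
    (hr : ∀ x y : ZMod p × ZMod p,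
      (r (x, y)).1 = σ x y ∧ σ (σ x y) ((r (x, y)).2) = x) :
    IsYBSolution r ∧ IsSimpleSolution r := by
  classical
  have hσ' : ∀ x y : ZMod p × ZMod p, σ x y = SimpleAux.Sf t J x y := by
    rintro ⟨i, j⟩ ⟨k, l⟩
    exact hσ i j k l
  have hJt : ∀ a, J (t * a) = t * J a - (t - 1) * J 0 := fun a => by simpa using hpow 1 a
  have hJit : ∀ a, J (t⁻¹ * a) = t⁻¹ * J a - (t⁻¹ - 1) * J 0 := fun a => by
    simpa [zpow_neg, zpow_one] using hpow (-1) a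
  have hr1 : ∀ x y, (r (x, y)).1 = SimpleAux.Sf t J x y := fun x y => by
    rw [(hr x y).1, hσ']
  have hback : ∀ x y, SimpleAux.Sf t J (SimpleAux.Sf t J x y) ((r (x, y)).2) = x := fun x y => by
    have h := (hr x y).2
    rw [hσ', hσ'] at h
    exact h
  have hr2 : ∀ x y, (r (x, y)).2 = SimpleAux.Gf t J x y := fun x y => by
    apply SimpleAux.Sf_inj ht (SimpleAux.Sf t J x y)
    rw [hback, SimpleAux.SfGf ht hsym]
  have hrpair : ∀ x y, r (x, y) = (SimpleAux.Sf t J x y, SimpleAux.Gf t J x y) := fun x y => by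
    rw [← hr1, ← hr2]
  constructor
  · constructor
    · rintro ⟨x, y⟩
      rw [hrpair, hrpair, SimpleAux.SfGf ht hsym, SimpleAux.GfSf ht hsym]
    · intro x
      have h : (fun y => (r (x, y)).1) = SimpleAux.Sf t J x := funext fun y => hr1 x y
      rw [h]
      exact SimpleAux.Sf_bij ht x
    · intro y
      have h : (fun x => (r (x, y)).2) = fun x => SimpleAux.Gf t J x y :=
        funext fun x => hr2 x y
      rw [h]
      exact SimpleAux.Gf_bij ht y
    · funext q
      obtain ⟨x, y, z⟩ := q
      simp only [Function.comp_apply, yb12, yb23, hrpair]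
      obtain ⟨i, j⟩ := x; obtain ⟨k, l⟩ := y; obtain ⟨m, n⟩ := z
      exact SimpleAux.pair_eq (SimpleAux.braidA ht hsym hJt hJit i j k l m n)
        (SimpleAux.pair_eq (SimpleAux.braidB ht hsym hJt hJit i j k l m n)
          (SimpleAux.braidC ht hsym hJit i j k l m n))
  · constructor
    · exact ⟨((0:ZMod p), (0:ZMod p)), ((1:ZMod p), (0:ZMod p)),
        fun h => one_ne_zero (α := ZMod p) (congrArg Prod.fst h).symm⟩
    · intro Y s hs f hsurj hhom
      by_cases hinj : Function.Injective f
      · exact Or.inl ⟨hinj, hsurj⟩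
      · refine Or.inr ?_
        rw [Function.not_injective_iff] at hinj
        obtain ⟨x, x', hfeq, hxx⟩ := hinj
        have hσf : ∀ w z, f (SimpleAux.Sf t J w z) = (s (f w, f z)).1 := fun w z => by
          rw [← hr1]
          exact hhom w z
        have H1 : ∀ w z z', f z = f z' →
            f (SimpleAux.Sf t J w z) = f (SimpleAux.Sf t J w z') := by
          intro w z z' h
          rw [hσf, hσf, h]
        have H2 : ∀ a a' z, f a = f a' →
            f (SimpleAux.Sf t J a z) = f (SimpleAux.Sf t J a' z) := by
          intro a a' z h
          rw [hσf, hσf, h]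
        have hγf : ∀ a b, f (SimpleAux.Gf t J a b) = (s (f a, f b)).2 := by
          intro a b
          apply (hs.sigma_bij ((s (f a, f b)).1)).injective
          show (s ((s (f a, f b)).1, f (SimpleAux.Gf t J a b))).1
             = (s ((s (f a, f b)).1, (s (f a, f b)).2)).1
          have e1 : (s ((s (f a, f b)).1, (s (f a, f b)).2)).1 = f a := by
            rw [Prod.mk.eta, hs.invol]
          rw [e1]
          have e2 : (s (f a, f b)).1 = f (SimpleAux.Sf t J a b) := (hσf a b).symm
          rw [e2, ← hσf (SimpleAux.Sf t J a b) (SimpleAux.Gf t J a b),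
            SimpleAux.SfGf ht hsym]
        have H4 : ∀ a a' z, f a = f a' →
            f (SimpleAux.Gf t J z a) = f (SimpleAux.Gf t J z a') := by
          intro a a' z h
          rw [hγf, hγf, h]
        have htotal := SimpleAux.main_total ht hsym hne H1 H2 H4 hxx hfeq
        constructor
        intro y y'
        obtain ⟨z, rfl⟩ := hsurj y
        obtain ⟨z', rfl⟩ := hsurj y'
        exact htotal z z'
end

section
/- Let p be a prime number, let t ∈ ℤ/(p) be nonzero, and let j₀,…,j_{p−1} ∈ ℤ/(p) (indices read modulo p) satisfy j_i = j_{−i} for all i and j_{tˢi} = tˢ j_i − (tˢ − 1) j₀ for all i ∈ ℤ/(p) and all s ∈ ℤ. If j_i ≠ j_k for some i ≠ k, then the multiplicative order of t in (ℤ/(p))ˣ is odd. -/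
open Function

/-- under the hypotheses of Theorem `newexample`, the
multiplicative order of `t` in `(ℤ/(p))ˣ` is odd. -/
theorem order_of_t_odd (p : ℕ) [Fact p.Prime]
    (t : ZMod p) (ht : t ≠ 0) (J : ZMod p → ZMod p)
    (hsym : ∀ i : ZMod p, J (-i) = J i)
    (hpow : ∀ (s : ℤ) (i : ZMod p),
      J (t ^ s * i) = t ^ s * J i - (t ^ s - 1) * J 0)
    (hne : ∃ i k : ZMod p, i ≠ k ∧ J i ≠ J k) :
    Odd (orderOf t) := by
  have hp := (Fact.out : p.Prime)
  by_cases hp2 : p = 2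
  · subst hp2
    have ht1 : t = 1 := by
      have key : ∀ x : ZMod 2, x ≠ 0 → x = 1 := by
        intro x hx
        fin_cases x
        · exact absurd rfl hx
        · rfl
      exact key t ht
    rw [ht1, orderOf_one]
    exact odd_one
  rcases Nat.even_or_odd (orderOf t) with he | ho
  swap
  · exact ho
  exfalso
  have htu : IsUnit t := isUnit_iff_ne_zero.mpr ht
  set n := orderOf t with hn
  have hnpos : 0 < n := by
    rw [hn, ← htu.unit_spec, orderOf_units]
    exact orderOf_pos htu.unit
  obtain ⟨m, hm⟩ := he
  have hmpos : 0 < m := by omega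
  have htm2 : (t ^ m) ^ 2 = 1 := by
    rw [← pow_mul]
    have : m * 2 = n := by omega
    rw [this, hn, pow_orderOf_eq_one]
  have htmne : t ^ m ≠ 1 := by
    intro h
    have := orderOf_dvd_of_pow_eq_one h
    have := Nat.le_of_dvd hmpos this
    omega
  have htm : t ^ m = -1 := by
    have h : (t ^ m - 1) * (t ^ m + 1) = 0 := by linear_combination htm2
    rcases mul_eq_zero.mp h with h1 | h1
    · exact absurd (sub_eq_zero.mp h1) htmne
    · exact eq_neg_of_add_eq_zero_left h1
  have h2ne : (2 : ZMod p) ≠ 0 := by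
    intro h
    have : ((2 : ℕ) : ZMod p) = 0 := by exact_mod_cast h
    rw [ZMod.natCast_eq_zero_iff] at this
    exact hp2 ((Nat.prime_dvd_prime_iff_eq hp Nat.prime_two).mp this)
  have key : ∀ i : ZMod p, J i = J 0 := by
    intro i
    have h1 := hpow (m : ℤ) i
    rw [zpow_natCast, htm] at h1
    have h2 : J (-i) = J i := hsym i
    rw [show (-1 : ZMod p) * i = -i by ring, h2] at h1
    have : (2 : ZMod p) * (J i - J 0) = 0 := by linear_combination h1
    rcases mul_eq_zero.mp this with h | h
    · exact absurd h h2ne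
    · exact sub_eq_zero.mp h
  obtain ⟨i, k, hik, hJ⟩ := hne
  exact hJ ((key i).trans (key k).symm)
end

section
/- Let p be a prime number, let X = ℤ/(p) × ℤ/(p), and let (X,r) be an indecomposable and irretractable solution of the YBE such that r((i,j),(k,l)) = (σ_{(i,j)}(k,l), σ_{σ_{(i,j)}(k,l)}⁻¹(i,j)) with σ_{(i,j)}(k,l) = (σ_j(k), d_{i,σ_j(k)}(l)) for some families of permutations σ_j and d_{i,k} of ℤ/(p). Then there exist a nonzero t ∈ ℤ/(p) and elements j₀,…,j_{p−1} ∈ ℤ/(p) satisfying j_i = j_{−i} for all i, j_{tˢi} = tˢ j_i − (tˢ − 1) j₀ for all i and all s ∈ ℤ, and j_i ≠ j_k for some i ≠ k, such that (X,r) is isomorphic as a solution to ((ℤ/(p))², r'), where r'((i,j),(k,l)) = (σ'_{(i,j)}(k,l), (σ'_{σ'_{(i,j)}(k,l)})⁻¹(i,j)) and σ'_{(i,j)}(k,l) = (tk + j, t(l − j_{tk+j−i})). -/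
open Function

theorem Equiv.Perm.apply_inv_self {α : Type*} (f : Equiv.Perm α) (x : α) : f (f⁻¹ x) = x :=
  Equiv.apply_symm_apply f x

theorem Equiv.Perm.inv_apply_self {α : Type*} (f : Equiv.Perm α) (x : α) : f⁻¹ (f x) = x :=
  Equiv.symm_apply_apply f x

/-- every indecomposable irretractable solution on
`ℤ/(p) × ℤ/(p)` of the special form
`σ_{(i,j)}(k,l) = (σ_j(k), d_{i,σ_j(k)}(l))` is isomorphic to one of the simple
solutions of Theorem `newexample`. -/
theorem classification_p_squared (p : ℕ) [Fact p.Prime]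
    (σ : ZMod p → Equiv.Perm (ZMod p)) (d : ZMod p → ZMod p → Equiv.Perm (ZMod p))
    (r : (ZMod p × ZMod p) × (ZMod p × ZMod p) → (ZMod p × ZMod p) × (ZMod p × ZMod p))
    (hr : ∀ i j k l : ZMod p,
      r ((i, j), (k, l)) = ((σ j k, d i (σ j k) l),
        ((σ (d i (σ j k) l))⁻¹ i, (d (σ j k) i)⁻¹ j)))
    (hsol : IsYBSolution r) (hind : IsIndecomposable r) (hirr : IsIrretractable r) :
    ∃ t : ZMod p, t ≠ 0 ∧ ∃ J : ZMod p → ZMod p,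
      (∀ i : ZMod p, J (-i) = J i) ∧
      (∀ (s : ℤ) (i : ZMod p), J (t ^ s * i) = t ^ s * J i - (t ^ s - 1) * J 0) ∧
      (∃ i k : ZMod p, i ≠ k ∧ J i ≠ J k) ∧
      ∃ (σ' : ZMod p × ZMod p → ZMod p × ZMod p → ZMod p × ZMod p)
        (r' : (ZMod p × ZMod p) × (ZMod p × ZMod p) →
              (ZMod p × ZMod p) × (ZMod p × ZMod p)),
        (∀ i j k l : ZMod p,
          σ' (i, j) (k, l) = (t * k + j, t * (l - J (t * k + j - i)))) ∧
        (∀ x y : ZMod p × ZMod p,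
          (r' (x, y)).1 = σ' x y ∧ σ' (σ' x y) ((r' (x, y)).2) = x) ∧
        ∃ f : ZMod p × ZMod p → ZMod p × ZMod p,
          Function.Bijective f ∧ IsSolHom r' r f := by
  classical
  haveI : Fact (1 < p) := ⟨(Fact.out (p := p.Prime)).one_lt⟩
  haveI : NeZero p := ⟨(Fact.out (p := p.Prime)).ne_zero⟩
  -- Step 1: extract the braid relation on first components
  have F1 : ∀ x y z : ZMod p × ZMod p,
      (r ((r (x,y)).1, (r ((r (x,y)).2, z)).1)).1 = (r (x, (r (y,z)).1)).1 := by
    intro x y z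
    have h := congrFun hsol.braid (x, y, z)
    simp only [Function.comp, yb12, yb23] at h
    have h1 := congrArg Prod.fst h
    exact h1
  have E12 : ∀ i j k l m n : ZMod p,
      (σ (d i (σ j k) l)) ((σ ((d (σ j k) i)⁻¹ j)) m) = σ j (σ l m) ∧
      d (σ j k) (σ (d i (σ j k) l) (σ ((d (σ j k) i)⁻¹ j) m))
        (d ((σ (d i (σ j k) l))⁻¹ i) (σ ((d (σ j k) i)⁻¹ j) m) n)
        = d i (σ j (σ l m)) (d k (σ l m) n) := by
    intro i j k l m n
    have h := F1 (i,j) (k,l) (m,n)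
    simp only [hr] at h
    simpa only [Prod.mk.injEq] using h
  have E1 : ∀ i j k l m : ZMod p,
      (σ (d i (σ j k) l)) ((σ ((d (σ j k) i)⁻¹ j)) m) = σ j (σ l m) :=
    fun i j k l m => (E12 i j k l m 0).1
  have E2c0 : ∀ i j k l m n : ZMod p,
      d (σ j k) (σ j (σ l m)) (d ((σ (d i (σ j k) l))⁻¹ i) (σ ((d (σ j k) i)⁻¹ j) m) n)
        = d i (σ j (σ l m)) (d k (σ l m) n) := by
    intro i j k l m n
    have h2 := (E12 i j k l m n).2
    rw [E1 i j k l m] at h2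
    exact h2
  -- Step 2: pointwise relations, injectivity, symmetry
  have hA : ∀ a b j l m : ZMod p, σ (d a b l) (σ j m) = σ (d b a j) (σ l m) := by
    intro a b j l m
    have h := E1 a (d b a j) ((σ (d b a j))⁻¹ b) l m
    simpa only [Equiv.Perm.apply_inv_self, Equiv.Perm.inv_apply_self] using h
  have hσinj : Function.Injective σ := by
    intro j j' hjj
    have h := hirr (0, j) (0, j') ?_
    · simpa only [Prod.mk.injEq, true_and] using h
    · rintro ⟨k, l⟩
      simp only [hr, hjj]
  have hdinj : ∀ a a' : ZMod p, (∀ b, d a b = d a' b) → a = a' := by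
    intro a a' hd
    have h := hirr (a, 0) (a', 0) ?_
    · simpa only [Prod.mk.injEq, and_true] using h
    · rintro ⟨k, l⟩
      simp only [hr, hd]
  have hdsym : ∀ a b : ZMod p, d a b = d b a := by
    intro a b
    have h1 : ∀ l : ZMod p, d a b l = d b a l := by
      intro l
      apply hσinj
      apply Equiv.ext
      intro u
      have h := hA a b l l ((σ l)⁻¹ u)
      have h' := hA b a l l ((σ l)⁻¹ u)
      rw [Equiv.Perm.apply_inv_self] at h h'
      rw [h, h']
    exact Equiv.ext h1
  have hA2 : ∀ a b j l m : ZMod p, σ (d a b l) (σ j m) = σ (d a b j) (σ l m) := by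
    intro a b j l m
    rw [hA a b j l m, hdsym b a]
  have hA2' : ∀ a b j l : ZMod p, σ (d a b l) * σ j = σ (d a b j) * σ l :=
    fun a b j l => Equiv.ext (fun m => hA2 a b j l m)
  set q : Equiv.Perm (ZMod p) := σ 0 with hq
  set τ : ZMod p → Equiv.Perm (ZMod p) := fun l => σ l * q⁻¹ with hτ
  have hτdef : ∀ l, τ l = σ l * q⁻¹ := fun l => rfl
  have hσd : ∀ a b l : ZMod p, σ (d a b l) = σ (d a b 0) * σ l * q⁻¹ := by
    intro a b l
    have h := hA2' a b 0 l
    rw [← hq] at h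
    rw [← h]
    group
  have hτcomm : ∀ l j : ZMod p, τ l * τ j = τ j * τ l := by
    intro l j
    have h := hA2' 0 0 j l
    rw [hσd 0 0 l, hσd 0 0 j] at h
    have h2 : σ l * q⁻¹ * σ j = σ j * q⁻¹ * σ l := by
      apply mul_left_cancel (a := σ (d 0 0 0))
      calc σ (d 0 0 0) * (σ l * q⁻¹ * σ j) = σ (d 0 0 0) * σ l * q⁻¹ * σ j := by group
      _ = σ (d 0 0 0) * σ j * q⁻¹ * σ l := h
      _ = σ (d 0 0 0) * (σ j * q⁻¹ * σ l) := by group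
    simp only [hτ]
    calc σ l * q⁻¹ * (σ j * q⁻¹) = (σ l * q⁻¹ * σ j) * q⁻¹ := by group
    _ = (σ j * q⁻¹ * σ l) * q⁻¹ := by rw [h2]
    _ = σ j * q⁻¹ * (σ l * q⁻¹) := by group
  have hR1 : ∀ l : ZMod p, q * τ l * q⁻¹ = (τ (d 0 0 0))⁻¹ * τ (d 0 0 l) := by
    intro l
    have h := hσd 0 0 l
    simp only [hτ]
    rw [h]
    group
  -- Step 3: transitivity of the group generated by the σ's
  set G₁ : Subgroup (Equiv.Perm (ZMod p)) := Subgroup.closure (Set.range σ) with hG₁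
  have hσG : ∀ j, σ j ∈ G₁ := fun j => Subgroup.subset_closure ⟨j, rfl⟩
  set P : Subgroup (Equiv.Perm (ZMod p × ZMod p)) :=
    { carrier := {g | ∃ π ∈ G₁, ∀ u : ZMod p × ZMod p, (g u).1 = π u.1}
      one_mem' := ⟨1, one_mem _, fun u => rfl⟩
      mul_mem' := by
        rintro g g' ⟨π, hπ, hg⟩ ⟨π', hπ', hg'⟩
        refine ⟨π * π', mul_mem hπ hπ', fun u => ?_⟩
        simp only [Equiv.Perm.mul_apply, hg, hg']
      inv_mem' := by
        rintro g ⟨π, hπ, hg⟩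
        refine ⟨π⁻¹, inv_mem hπ, fun u => ?_⟩
        have h := hg (g⁻¹ u)
        rw [Equiv.Perm.apply_inv_self] at h
        rw [h, Equiv.Perm.inv_apply_self] } with hP
  have hPG : permGroup r ≤ P := by
    apply Subgroup.closure_le (K := P) |>.mpr
    rintro g ⟨⟨i, j⟩, hg⟩
    refine ⟨σ j, hσG j, ?_⟩
    rintro ⟨k, l⟩
    rw [hg (k, l), hr]
  have TG1 : ∀ k k' : ZMod p, ∃ π ∈ G₁, π k = k' := by
    intro k k'
    obtain ⟨g, hg, hgk⟩ := hind (k, 0) (k', 0)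
    obtain ⟨π, hπ, hfib⟩ := hPG hg
    exact ⟨π, hπ, by have := hfib (k, 0); rw [hgk] at this; exact this.symm⟩
  -- Step 4: the abelian normal subgroup H
  set H : Subgroup (Equiv.Perm (ZMod p)) := Subgroup.closure (Set.range τ) with hH
  have hτH : ∀ l, τ l ∈ H := fun l => Subgroup.subset_closure ⟨l, rfl⟩
  have hcomm : ∀ x ∈ Set.range τ, ∀ y ∈ Set.range τ, x * y = y * x := by
    rintro x ⟨a, rfl⟩ y ⟨b, rfl⟩; exact hτcomm a b
  have Habel : ∀ x ∈ H, ∀ y ∈ H, x * y = y * x := by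
    intro x hx y hy
    have hle := Subgroup.closure_le_centralizer_centralizer (Set.range τ)
    exact Set.centralizer_centralizer_comm_of_comm hcomm x (hle hx) y (hle hy)
  have conj_inv : ∀ g : Equiv.Perm (ZMod p), (∀ x ∈ H, g * x * g⁻¹ ∈ H) →
      ∀ x ∈ H, g⁻¹ * x * g ∈ H := by
    intro g hg x hx
    have hinj : Function.Injective (fun y : H => (⟨g * y * g⁻¹, hg y y.2⟩ : H)) := by
      intro y y' hyy
      simp only [Subtype.mk.injEq, mul_left_cancel_iff, mul_right_cancel_iff] at hyy
      exact Subtype.ext hyy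
    have hsurj := Finite.injective_iff_surjective.mp hinj
    obtain ⟨y, hy⟩ := hsurj ⟨x, hx⟩
    have h1 : g * y * g⁻¹ = x := congrArg Subtype.val hy
    have h2 : (y : Equiv.Perm (ZMod p)) = g⁻¹ * x * g := by rw [← h1]; group
    rw [← h2]; exact y.2
  have qnorm : ∀ x ∈ H, q * x * q⁻¹ ∈ H := by
    intro x hx
    have hmap : (Subgroup.closure (Set.range τ)).map (MulAut.conj q).toMonoidHom ≤ H := by
      rw [MonoidHom.map_closure]
      apply Subgroup.closure_le _ |>.mpr
      rintro y ⟨z, ⟨l, rfl⟩, rfl⟩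
      have h1 : (MulAut.conj q).toMonoidHom (τ l) = q * τ l * q⁻¹ := rfl
      rw [h1, hR1 l]
      exact mul_mem (inv_mem (hτH _)) (hτH _)
    exact hmap ⟨x, hx, rfl⟩
  have Gnorm : ∀ g ∈ G₁, ∀ x ∈ H, g * x * g⁻¹ ∈ H := by
    intro g hg
    induction hg using Subgroup.closure_induction with
    | mem g hgen =>
      obtain ⟨l, rfl⟩ := hgen
      intro x hx
      have hσl : σ l = τ l * q := by rw [hτdef]; group
      rw [hσl]
      have hin : q * x * q⁻¹ ∈ H := qnorm x hx
      have hmem : τ l * (q * x * q⁻¹) * (τ l)⁻¹ ∈ H :=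
        mul_mem (mul_mem (hτH l) hin) (inv_mem (hτH l))
      have heq : τ l * q * x * (τ l * q)⁻¹ = τ l * (q * x * q⁻¹) * (τ l)⁻¹ := by
        group
      rw [heq]; exact hmem
    | one => intro x hx; simpa using hx
    | mul a b _ _ iha ihb =>
      intro x hx
      have h1 : a * (b * x * b⁻¹) * a⁻¹ ∈ H := iha _ (ihb x hx)
      simpa [mul_assoc] using h1
    | inv a _ iha =>
      intro x hx
      exact conj_inv a iha x hx
  -- Step 5: H is transitive, regular, cyclic of order p
  have Hne : ∃ h ∈ H, h ≠ 1 := by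
    refine ⟨τ 1, hτH 1, fun h1 => ?_⟩
    have h2 : σ 1 = σ 0 := by
      have h3 := hτdef 1; rw [h1] at h3
      have h4 : σ 1 * (σ 0)⁻¹ = 1 := by rw [← hq]; exact h3.symm
      calc σ 1 = σ 1 * (σ 0)⁻¹ * σ 0 := by group
      _ = 1 * σ 0 := by rw [h4]
      _ = σ 0 := by group
    exact one_ne_zero (hσinj h2)
  set O : ZMod p → Finset (ZMod p) :=
    fun x => Finset.univ.filter (fun y => ∃ h ∈ H, h x = y) with hO
  have hOmem : ∀ x y : ZMod p, y ∈ O x ↔ ∃ h ∈ H, h x = y := by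
    intro x y; simp [hO]
  have hOself : ∀ x, x ∈ O x := fun x => (hOmem x x).mpr ⟨1, one_mem _, rfl⟩
  have hOeq : ∀ x y, x ∈ O y → O x = O y := by
    intro x y hxy
    obtain ⟨h, hh, rfl⟩ := (hOmem y x).mp hxy
    ext z
    rw [hOmem, hOmem]
    constructor
    · rintro ⟨h', hh', rfl⟩
      exact ⟨h' * h, mul_mem hh' hh, rfl⟩
    · rintro ⟨h', hh', rfl⟩
      refine ⟨h' * h⁻¹, mul_mem hh' (inv_mem hh), ?_⟩
      simp [Equiv.Perm.mul_apply]
  have cardconst : ∀ x y : ZMod p, (O x).card = (O y).card := by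
    intro x y
    obtain ⟨g, hg, rfl⟩ := TG1 x y
    apply Finset.card_bij (fun a _ => g a)
    · intro a ha
      obtain ⟨h, hh, rfl⟩ := (hOmem x a).mp ha
      rw [hOmem]
      refine ⟨g * h * g⁻¹, Gnorm g hg h hh, ?_⟩
      simp [Equiv.Perm.mul_apply]
    · intro a _ a' _ haa
      exact g.injective haa
    · intro b hb
      obtain ⟨h, hh, rfl⟩ := (hOmem (g x) b).mp hb
      refine ⟨(g⁻¹ * h * g) x, ?_, ?_⟩
      · rw [hOmem]
        exact ⟨g⁻¹ * h * g, conj_inv g (Gnorm g hg) h hh, rfl⟩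
      · simp [Equiv.Perm.mul_apply]
  have hcardsum : Fintype.card (ZMod p) =
      ∑ B ∈ Finset.univ.image O, (Finset.univ.filter (fun x => O x = B)).card := by
    rw [← Finset.card_univ]
    exact Finset.card_eq_sum_card_fiberwise
      (fun x _ => Finset.mem_image_of_mem O (Finset.mem_univ x))
  have hfiber : ∀ x : ZMod p, (Finset.univ.filter (fun z => O z = O x)) = O x := by
    intro x
    ext z
    simp only [Finset.mem_filter, Finset.mem_univ, true_and]
    constructor
    · intro h; rw [← h]; exact hOself z
    · intro h; exact hOeq z x h
  set s := (O 0).card with hs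
  have hps : p = (Finset.univ.image O).card * s := by
    have hconst : ∀ B ∈ Finset.univ.image O,
        (Finset.univ.filter (fun x => O x = B)).card = s := by
      intro B hB
      obtain ⟨x, _, rfl⟩ := Finset.mem_image.mp hB
      rw [hfiber x]
      exact cardconst x 0
    calc p = Fintype.card (ZMod p) := (ZMod.card p).symm
    _ = ∑ B ∈ Finset.univ.image O, (Finset.univ.filter (fun x => O x = B)).card := hcardsum
    _ = ∑ _B ∈ Finset.univ.image O, s := Finset.sum_congr rfl hconst
    _ = (Finset.univ.image O).card * s := by rw [Finset.sum_const, smul_eq_mul]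
  have hs2 : 2 ≤ s := by
    obtain ⟨h₀, hh₀, hne⟩ := Hne
    have hmove : ∃ x, h₀ x ≠ x := by
      by_contra hc
      push_neg at hc
      exact hne (Equiv.ext hc)
    obtain ⟨x, hx⟩ := hmove
    rw [hs, cardconst 0 x]
    apply Finset.one_lt_card.mpr
    exact ⟨x, hOself x, h₀ x, (hOmem x (h₀ x)).mpr ⟨h₀, hh₀, rfl⟩, fun e => hx e.symm⟩
  have hsp : s = p := by
    have hdvd : s ∣ p := ⟨(Finset.univ.image O).card, hps.trans (mul_comm _ _)⟩
    rcases (Fact.out (p := p.Prime)).eq_one_or_self_of_dvd s hdvd with h1 | h2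
    · omega
    · exact h2
  have Huniv : ∀ x : ZMod p, O x = Finset.univ := by
    intro x
    apply Finset.eq_univ_of_card
    rw [cardconst x 0, ← hs, hsp, ZMod.card p]
  have Htrans : ∀ x y : ZMod p, ∃ h ∈ H, h x = y := by
    intro x y
    exact (hOmem x y).mp (by rw [Huniv x]; exact Finset.mem_univ y)
  have Hreg : ∀ h ∈ H, ∀ y : ZMod p, h y = y → h = 1 := by
    intro h hh y hy
    apply Equiv.ext
    intro z
    obtain ⟨g, hgH, rfl⟩ := Htrans y z
    have hcm := Habel h hh g hgH
    calc h (g y) = (h * g) y := rfl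
    _ = (g * h) y := by rw [hcm]
    _ = g (h y) := rfl
    _ = g y := by rw [hy]
  have cardH : Nat.card H = p := by
    have hbij : Function.Bijective (fun h : H => (h : Equiv.Perm (ZMod p)) 0) := by
      constructor
      · intro a b hab
        have h1 : ((b : Equiv.Perm (ZMod p))⁻¹ * a) 0 = 0 := by
          simp only [Equiv.Perm.mul_apply, hab, Equiv.Perm.inv_apply_self]
        have h2 := Hreg _ (mul_mem (inv_mem b.2) a.2) 0 h1
        exact Subtype.ext (inv_mul_eq_one.mp h2).symm
      · intro y
        obtain ⟨h, hh, hhy⟩ := Htrans 0 y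
        exact ⟨⟨h, hh⟩, hhy⟩
    rw [Nat.card_eq_of_bijective _ hbij, Nat.card_zmod]
  haveI : IsCyclic H := isCyclic_of_prime_card cardH
  obtain ⟨gen, hgen⟩ := IsCyclic.exists_generator (α := H)
  set g0 : Equiv.Perm (ZMod p) := (gen : Equiv.Perm (ZMod p)) with hg0
  have hpow : ∀ x ∈ H, ∃ n : ℤ, x = g0 ^ n := by
    intro x hx
    obtain ⟨n, hn⟩ := hgen ⟨x, hx⟩
    refine ⟨n, ?_⟩
    have h2 := congrArg (Subtype.val : H → Equiv.Perm (ZMod p)) hn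
    rw [SubgroupClass.coe_zpow] at h2
    exact h2.symm
  have horder : orderOf g0 = p := by
    have h2 : orderOf gen = p := by
      rw [orderOf_eq_card_of_forall_mem_zpowers hgen]
      exact cardH
    rw [hg0, Subgroup.orderOf_coe]
    exact h2
  have hmemH : g0 ∈ H := gen.2
  -- Step 6: coordinates via the regular cyclic group
  set ι : ZMod p → Equiv.Perm (ZMod p) := fun n => g0 ^ n.val with hι
  have ιmem : ∀ n, ι n ∈ H := fun n => pow_mem hmemH _
  have hmodp : ∀ k : ℕ, g0 ^ (k % p) = g0 ^ k := by
    intro k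
    conv_lhs => rw [show k % p = k % orderOf g0 by rw [horder]]
    exact pow_mod_orderOf g0 k
  have ιadd : ∀ a b : ZMod p, ι (a + b) = ι a * ι b := by
    intro a b
    simp only [hι]
    rw [ZMod.val_add, hmodp, pow_add]
  have ιinj : Function.Injective ι := by
    intro a b hab
    simp only [hι] at hab
    rw [pow_eq_pow_iff_modEq, horder] at hab
    exact ZMod.val_injective p (hab.eq_of_lt_of_lt (ZMod.val_lt a) (ZMod.val_lt b))
  have ιzpow : ∀ n : ℤ, g0 ^ n = ι ((n : ZMod p)) := by
    intro n
    have h1 : g0 ^ n = g0 ^ (n % (p : ℤ)) := by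
      conv_rhs => rw [show (n % (p:ℤ)) = n % (orderOf g0 : ℤ) by rw [horder]]
      rw [zpow_mod_orderOf]
    rw [h1]
    have h2 : n % (p : ℤ) = (((n : ZMod p).val : ℤ)) := (ZMod.val_intCast n).symm
    rw [h2, zpow_natCast]
  set φ : ZMod p → ZMod p := fun n => ι n 0 with hφ
  have φadd : ∀ a b : ZMod p, φ (a + b) = ι a (φ b) := by
    intro a b
    simp only [hφ]
    rw [ιadd]
    rfl
  have φinj : Function.Injective φ := by
    intro a b hab
    apply ιinj
    have hmem : (ι b)⁻¹ * ι a ∈ H := mul_mem (inv_mem (ιmem b)) (ιmem a)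
    have hfix : ((ι b)⁻¹ * ι a) 0 = 0 := by
      simp only [Equiv.Perm.mul_apply]
      rw [show (ι a) 0 = φ a from rfl, hab]
      exact Equiv.Perm.inv_apply_self _ _
    have h1 := Hreg _ hmem 0 hfix
    have h2 := congrArg (fun z => (ι b) * z) h1
    simpa [← mul_assoc] using h2
  have φsurj : Function.Surjective φ := by
    intro y
    obtain ⟨g, hgH, hgy⟩ := Htrans 0 y
    obtain ⟨n, rfl⟩ := hpow g hgH
    exact ⟨(n : ZMod p), by rw [hφ]; simp only; rw [← ιzpow]; exact hgy⟩
  have φbij : Function.Bijective φ := ⟨φinj, φsurj⟩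
  obtain ⟨nt, hnt⟩ := hpow (q * g0 * q⁻¹) (qnorm g0 hmemH)
  set t : ZMod p := (nt : ZMod p) with ht
  have hconjh : q * g0 * q⁻¹ = ι t := by rw [hnt, ιzpow]
  have htne : t ≠ 0 := by
    intro h0
    have h1 : q * g0 * q⁻¹ = 1 := by
      rw [hconjh, h0, hι]; simp [ZMod.val_zero]
    have hh1 : g0 = 1 := by
      have h2 := congrArg (fun z => q⁻¹ * z * q) h1
      simpa [← mul_assoc] using h2
    rw [hh1, orderOf_one] at horder
    have := (Fact.out (p := p.Prime)).one_lt
    omega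
  have hconjι : ∀ n : ZMod p, q * ι n * q⁻¹ = ι (t * n) := by
    intro n
    have h1 : q * ι n * q⁻¹ = (q * g0 * q⁻¹) ^ n.val := by
      simp only [hι]
      induction n.val with
      | zero => simp
      | succ k ih =>
        rw [pow_succ, pow_succ, ← ih]
        group
    rw [h1, hconjh, hι]
    simp only
    rw [← pow_mul, ZMod.val_mul, hmodp, mul_comm t.val n.val]
  set φE : ZMod p ≃ ZMod p := Equiv.ofBijective φ φbij with hφE
  set c₀ : ZMod p := φE.symm (q 0) with hc₀
  have hqφ : ∀ n : ZMod p, q (φ n) = φ (t * n + c₀) := by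
    intro n
    have h1 : q (φ n) = (q * ι n * q⁻¹) (q 0) := by
      simp only [Equiv.Perm.mul_apply, Equiv.Perm.inv_apply_self]
      rfl
    rw [h1, hconjι]
    have h2 : q 0 = φ c₀ := (φE.apply_symm_apply (q 0)).symm
    rw [h2, ← φadd]
  choose e he using fun l => hpow (τ l) (hτH l)
  have τι : ∀ l, τ l = ι ((e l : ZMod p)) := by
    intro l; rw [he l, ιzpow]
  set c : ZMod p → ZMod p := fun l => t * 0 + c₀ + ((e l : ZMod p)) with hc
  have hσφ : ∀ l m, σ l (φ m) = φ (t * m + c l) := by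
    intro l m
    have hσl : σ l = τ l * q := by rw [hτdef]; group
    have h1 : σ l (φ m) = τ l (q (φ m)) := by rw [hσl]; rfl
    rw [h1, hqφ, τι, ← φadd]
    congr 1
    rw [hc]
    ring
  have cinj : Function.Injective c := by
    intro l l' hll
    rw [hc] at hll
    simp only at hll
    have h1 : ((e l : ZMod p)) = ((e l' : ZMod p)) := by
      have := add_left_cancel hll
      exact this
    have h2 : τ l = τ l' := by rw [τι, τι, h1]
    have h3 : σ l = σ l' := by
      have := congrArg (fun z => z * q) h2
      simp only [hτ] at this
      simpa [mul_assoc] using this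
    exact hσinj h3
  have cbij : Function.Bijective c := Finite.injective_iff_bijective.mp cinj
  set cE : ZMod p ≃ ZMod p := Equiv.ofBijective c cbij with hcE
  have hσc : ∀ l m, σ l (φE m) = φE (t * m + cE l) := hσφ
  -- Step 7: scalar analysis of d, and the final construction
  clear hqφ hconjι hconjh hnt τι he hσφ φadd ιadd ιinj ιzpow ιmem hmodp hpow
  clear hOmem hOself hOeq cardconst hcardsum hfiber hps hs2 hsp Huniv Htrans Hreg cardH
  clear Hne hτH hcomm Habel conj_inv qnorm Gnorm hR1 hτcomm hσd hA2' hA hσG hPG TG1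
  clear E1 E12 F1 horder hmemH hgen
  set V : ZMod p → ZMod p → ZMod p := fun a b => cE (d a b (cE.symm 0)) with hV
  have hscal : ∀ a b j l : ZMod p, t * cE j + cE (d a b l) = t * cE l + cE (d a b j) := by
    intro a b j l
    have h := hA2 a b j l (φE 0)
    rw [hσc j 0, hσc l 0, hσc (d a b l) (t * 0 + cE j), hσc (d a b j) (t * 0 + cE l)] at h
    have h2 := φE.injective h
    linear_combination h2
  have LD : ∀ a b l : ZMod p, cE (d a b l) = t * cE l + V a b := by
    intro a b l
    have h := hscal a b (cE.symm 0) l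
    rw [cE.apply_symm_apply] at h
    rw [hV]
    linear_combination h
  have hVsym : ∀ a b, V a b = V b a := by intro a b; rw [hV]; simp only; rw [hdsym]
  have dφ : ∀ a b w, d a b (cE.symm w) = cE.symm (t * w + V a b) := by
    intro a b w
    have h := LD a b (cE.symm w)
    rw [cE.apply_symm_apply] at h
    rw [← h, cE.symm_apply_apply]
  have dinvφ : ∀ a b w, (d a b)⁻¹ (cE.symm w) = cE.symm ((w - V a b) * t⁻¹) := by
    intro a b w
    have h : d a b (cE.symm ((w - V a b) * t⁻¹)) = cE.symm w := by
      rw [dφ]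
      congr 1
      field_simp
      ring
    rw [← h, Equiv.Perm.inv_apply_self]
  have σφ' : ∀ w u, σ (cE.symm w) (φE u) = φE (t * u + w) := by
    intro w u; rw [hσc, cE.apply_symm_apply]
  have σinvφ : ∀ x u, (σ x)⁻¹ (φE u) = φE ((u - cE x) * t⁻¹) := by
    intro x u
    have h : σ x (φE ((u - cE x) * t⁻¹)) = φE u := by
      rw [hσc]
      congr 1
      field_simp
      ring
    rw [← h, Equiv.Perm.inv_apply_self]
  have E2c : ∀ i j k l m : ZMod p,
      t * V ((σ (d i (σ j k) l))⁻¹ i) (σ ((d (σ j k) i)⁻¹ j) m) + V (σ j k) (σ j (σ l m))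
        = t * V k (σ l m) + V i (σ j (σ l m)) := by
    intro i j k l m
    have h := congrArg cE (E2c0 i j k l m (cE.symm 0))
    rw [LD, LD, LD, LD, cE.apply_symm_apply] at h
    linear_combination h
  have SL : ∀ a b j0 l0 M : ZMod p,
      t * V (φE ((a - (t * l0 + V (φE a) (φE b))) * t⁻¹))
          (φE (t * M + (j0 - V (φE a) (φE b)) * t⁻¹))
        + V (φE b) (φE (t * (t * M + l0) + j0))
      = t * V (φE ((b - j0) * t⁻¹)) (φE (t * M + l0))
        + V (φE a) (φE (t * (t * M + l0) + j0)) := by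
    intro a b j0 l0 M
    have h := E2c (φE a) (cE.symm j0) (φE ((b - j0) * t⁻¹)) (cE.symm l0) (φE M)
    have r1 : σ (cE.symm j0) (φE ((b - j0) * t⁻¹)) = φE b := by
      rw [σφ']; congr 1; field_simp; ring
    rw [r1] at h
    rw [show d (φE a) (φE b) (cE.symm l0) = cE.symm (t * l0 + V (φE a) (φE b)) from
      dφ _ _ _] at h
    rw [show (σ (cE.symm (t * l0 + V (φE a) (φE b))))⁻¹ (φE a)
        = φE ((a - (t * l0 + V (φE a) (φE b))) * t⁻¹) by
      rw [σinvφ, cE.apply_symm_apply]] at h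
    rw [show (d (φE b) (φE a))⁻¹ (cE.symm j0) = cE.symm ((j0 - V (φE a) (φE b)) * t⁻¹) by
      rw [dinvφ, hVsym]] at h
    rw [σφ', σφ'] at h
    rw [show σ (cE.symm j0) (φE (t * M + l0)) = φE (t * (t * M + l0) + j0) from
      σφ' _ _] at h
    exact h
  set α : ZMod p := (0 - V (φE 0) (φE 0)) * t⁻¹ with hα
  set E : ZMod p → ZMod p := fun δ => V (φE α) (φE (α + δ)) with hE
  have Vdiff : ∀ x y : ZMod p, V (φE x) (φE y) = E (y - x) := by
    intro x y
    have h := SL 0 0 (V (φE 0) (φE 0)) (α - x) (y * t⁻¹)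
    rw [show (0 - (t * (α - x) + V (φE 0) (φE 0))) * t⁻¹ = x by
      rw [hα]; field_simp; ring] at h
    rw [show t * (y * t⁻¹) + (V (φE 0) (φE 0) - V (φE 0) (φE 0)) * t⁻¹ = y by
      field_simp; ring] at h
    rw [show (0 - V (φE 0) (φE 0)) * t⁻¹ = α from hα.symm] at h
    rw [show t * (y * t⁻¹) + (α - x) = α + (y - x) by field_simp; ring] at h
    have h2 := add_right_cancel h
    have h3 := mul_left_cancel₀ htne h2
    rw [h3, hE]
  have EKey : ∀ X Y : ZMod p, t * E (X * t⁻¹) + E Y = t * E (Y * t⁻¹) + E X := by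
    intro X Y
    have h := SL (-X) (-Y) 0 0 0
    simp only [Vdiff] at h
    rw [show t * 0 + (0 - E (-Y - -X)) * t⁻¹ - (-X - (t * 0 + E (-Y - -X))) * t⁻¹
        = X * t⁻¹ by field_simp; ring] at h
    rw [show t * (t * 0 + 0) + 0 - -Y = Y by ring] at h
    rw [show t * 0 + 0 - (-Y - 0) * t⁻¹ = Y * t⁻¹ by field_simp; ring] at h
    rw [show t * (t * 0 + 0) + 0 - -X = X by ring] at h
    exact h
  have Emul : ∀ Z : ZMod p, E (t * Z) = t * E Z - (t - 1) * E 0 := by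
    intro Z
    have h := EKey (t * Z) 0
    rw [show t * Z * t⁻¹ = Z by field_simp, show (0 : ZMod p) * t⁻¹ = 0 by ring] at h
    linear_combination -h
  have Esym : ∀ δ : ZMod p, E (-δ) = E δ := by
    intro δ
    have h1 : E (-δ) = V (φE (α + δ)) (φE α) := by
      rw [Vdiff]; congr 1; ring
    rw [h1, hVsym, Vdiff, hE]
    simp
  set J : ZMod p → ZMod p := fun δ => -(t⁻¹ * E δ) with hJ
  have EJ : ∀ δ, E δ = -(t * J δ) := by
    intro δ
    simp only [hJ, mul_neg, neg_neg, ← mul_assoc, mul_inv_cancel₀ htne, one_mul]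
  have Jsym : ∀ i : ZMod p, J (-i) = J i := by
    intro i; rw [hJ]; simp only [Esym]
  have Jmul : ∀ Z : ZMod p, J (t * Z) = t * J Z - (t - 1) * J 0 := by
    intro Z
    have h := Emul Z
    rw [EJ, EJ, EJ] at h
    have h2 : t * (J (t * Z)) = t * (t * J Z - (t - 1) * J 0) := by linear_combination -h
    exact mul_left_cancel₀ htne h2
  have JdivT : ∀ W : ZMod p, t * J (t⁻¹ * W) = J W + (t - 1) * J 0 := by
    intro W
    have h := Jmul (t⁻¹ * W)
    rw [show t * (t⁻¹ * W) = W by field_simp] at h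
    linear_combination -h
  have Jzpow : ∀ (s : ℤ) (i : ZMod p), J (t ^ s * i) = t ^ s * J i - (t ^ s - 1) * J 0 := by
    intro s
    induction s using Int.induction_on with
    | zero => intro i; norm_num
    | succ n ih =>
      intro i
      rw [show t ^ ((n : ℤ) + 1) * i = t * (t ^ (n : ℤ) * i) by
        rw [zpow_add_one₀ htne]; ring]
      rw [Jmul, ih, zpow_add_one₀ htne]
      ring
    | pred n ih =>
      intro i
      rw [show t ^ (-(n : ℤ) - 1) * i = t⁻¹ * (t ^ (-(n : ℤ)) * i) by
        rw [zpow_sub_one₀ htne]; ring]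
      apply mul_left_cancel₀ htne
      rw [JdivT, ih, zpow_sub_one₀ htne]
      have hu : t * t⁻¹ = 1 := mul_inv_cancel₀ htne
      linear_combination (t ^ (-(n:ℤ)) * J 0 - t ^ (-(n:ℤ)) * J i) * hu
  have Jnon : ∃ i k : ZMod p, i ≠ k ∧ J i ≠ J k := by
    by_contra hc
    push_neg at hc
    have hJconst : ∀ i k : ZMod p, J i = J k := by
      intro i k
      by_cases hik : i = k
      · rw [hik]
      · exact hc i k hik
    have hEconst : ∀ i k : ZMod p, E i = E k := by
      intro i k
      have h1 := hJconst i k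
      rw [hJ] at h1
      simp only at h1
      have h2 : t * (t⁻¹ * E i) = t * (t⁻¹ * E k) := by
        rw [show t⁻¹ * E i = t⁻¹ * E k from by linear_combination -h1]
      field_simp at h2
      exact h2
    have hVconst : ∀ a b : ZMod p, V a b = E 0 := by
      intro a b
      have h1 : V a b = V (φE (φE.symm a)) (φE (φE.symm b)) := by
        rw [φE.apply_symm_apply, φE.apply_symm_apply]
      rw [h1, Vdiff]
      exact hEconst _ _
    have hd01 : (0 : ZMod p) = 1 := by
      apply hdinj
      intro b
      apply Equiv.ext
      intro l
      have h1 : ∀ a : ZMod p, d a b l = cE.symm (t * cE l + E 0) := by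
        intro a
        have h2 := LD a b l
        rw [hVconst] at h2
        rw [← h2, cE.symm_apply_apply]
      rw [h1 0, h1 1]
    exact zero_ne_one hd01
  set σ' : ZMod p × ZMod p → ZMod p × ZMod p → ZMod p × ZMod p :=
    fun x y => (t * y.1 + x.2, t * (y.2 - J (t * y.1 + x.2 - x.1))) with hσ'
  set r' : (ZMod p × ZMod p) × (ZMod p × ZMod p) → (ZMod p × ZMod p) × (ZMod p × ZMod p) :=
    fun w => (σ' w.1 w.2,
      ((w.1.1 - (σ' w.1 w.2).2) * t⁻¹, w.1.2 * t⁻¹ + J (w.1.1 - (σ' w.1 w.2).1))) with hr'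
  refine ⟨t, htne, J, Jsym, Jzpow, Jnon, σ', r', fun i j k l => rfl, ?_, ?_⟩
  · intro x y
    refine ⟨rfl, ?_⟩
    have h1 : t * ((x.1 - (σ' x y).2) * t⁻¹) + (σ' x y).2 = x.1 := by
      field_simp
      ring
    have h2 : t * ((x.2 * t⁻¹ + J (x.1 - (σ' x y).1))
        - J (t * ((x.1 - (σ' x y).2) * t⁻¹) + (σ' x y).2 - (σ' x y).1)) = x.2 := by
      rw [h1, add_sub_cancel_right]
      field_simp
    exact Prod.ext h1 h2
  · refine ⟨fun u => (φE u.1, cE.symm u.2), ?_, ?_⟩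
    · exact (φE.prodCongr cE.symm).bijective
    · rintro ⟨i, j⟩ ⟨k, l⟩
      show (φE (σ' (i,j) (k,l)).1, cE.symm (σ' (i,j) (k,l)).2)
        = (r ((φE i, cE.symm j), (φE k, cE.symm l))).1
      rw [hr]
      have hfst : σ (cE.symm j) (φE k) = φE (t * k + j) := σφ' _ _
      rw [hfst]
      have hsnd : d (φE i) (φE (t * k + j)) (cE.symm l)
          = cE.symm (t * (l - J (t * k + j - i))) := by
        rw [dφ, Vdiff, EJ]
        congr 1
        ring
      rw [hsnd]
end

section
/- Let n > 1 be an integer and let j₀,…,j_{n−1} ∈ ℤ/(n) (indices read modulo n) satisfy j_i = j_{−i} for all i ∈ ℤ/(n). Let X = (ℤ/(n))² and define r : X × X → X × X by r((i,j),(k,l)) = (σ_{(i,j)}(k,l), σ_{σ_{(i,j)}(k,l)}⁻¹(i,j)), where σ_{(i,j)}(k,l) = (k + j, l − j_{k+j−i}). Then (X,r) is a solution of the YBE; it is indecomposable if and only if the subgroup of (ℤ/(n),+) generated by {j₀,…,j_{n−1}} is all of ℤ/(n); and it is irretractable if and only if whenever j_{i+k} = j_{i'+k} for every k ∈ ℤ/(n),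 one has i = i'. -/
open Function

/-- The permutation `σ_{(i,j)} : (k,l) ↦ (k + j, l − J (k + j − i))` as an `Equiv.Perm`. -/
def sigmaEquiv (n : ℕ) (J : ZMod n → ZMod n) (x : ZMod n × ZMod n) :
    Equiv.Perm (ZMod n × ZMod n) where
  toFun y := (y.1 + x.2, y.2 - J (y.1 + x.2 - x.1))
  invFun z := (z.1 - x.2, z.2 + J (z.1 - x.1))
  left_inv := fun ⟨a, b⟩ => by
    refine Prod.ext ?_ ?_
    · show a + x.2 - x.2 = a; ring
    · show b - J (a + x.2 - x.1) + J (a + x.2 - x.1) = b; ring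
  right_inv := fun ⟨c, d⟩ => by
    refine Prod.ext ?_ ?_
    · show c - x.2 + x.2 = c; ring
    · show d + J (c - x.1) - J (c - x.2 + x.2 - x.1) = d
      rw [show c - x.2 + x.2 - x.1 = c - x.1 by ring]; ring

/-- Proposition `ind`: for `σ_{(i,j)}(k,l) = (k + j, l − j_{k+j−i})`
with `j_i = j_{−i}`, `(X,r)` is a solution of the YBE; it is indecomposable iff
the `j_i` generate `(ℤ/(n),+)`, and irretractable iff the rows of the associated
circulant matrix are pairwise distinct. -/
theorem asymmetric_product_solution_indecomposable_irretractable_iff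
    (n : ℕ) (hn : 1 < n) (J : ZMod n → ZMod n)
    (hsym : ∀ i : ZMod n, J (-i) = J i)
    (σ : ZMod n × ZMod n → ZMod n × ZMod n → ZMod n × ZMod n)
    (hσ : ∀ i j k l : ZMod n, σ (i, j) (k, l) = (k + j, l - J (k + j - i)))
    (r : (ZMod n × ZMod n) × (ZMod n × ZMod n) → (ZMod n × ZMod n) × (ZMod n × ZMod n))
    (hr : ∀ x y : ZMod n × ZMod n,
      (r (x, y)).1 = σ x y ∧ σ (σ x y) ((r (x, y)).2) = x) :
    IsYBSolution r ∧
    (IsIndecomposable r ↔ AddSubgroup.closure (Set.range J) = (⊤ : AddSubgroup (ZMod n))) ∧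
    (IsIrretractable r ↔
      ∀ i i' : ZMod n, (∀ k : ZMod n, J (i + k) = J (i' + k)) → i = i') := by
  -- explicit formula for r
  have rexp : ∀ i j k l : ZMod n,
      r ((i, j), (k, l)) =
        ((k + j, l - J (k + j - i)),
         (i - l + J (k + j - i), j + J (k + j - i))) := by
    intro i j k l
    obtain ⟨h1, h2⟩ := hr (i, j) (k, l)
    rw [hσ] at h1
    have hs : σ (σ (i, j) (k, l)) ((r ((i, j), (k, l))).2) =
        ((r ((i, j), (k, l))).2.1 + (l - J (k + j - i)),
         (r ((i, j), (k, l))).2.2 -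
           J ((r ((i, j), (k, l))).2.1 + (l - J (k + j - i)) - (k + j))) := by
      rw [hσ i j k l]
      exact hσ (k + j) (l - J (k + j - i)) (r ((i, j), (k, l))).2.1 (r ((i, j), (k, l))).2.2
    rw [hs, Prod.mk.injEq] at h2
    obtain ⟨e1, e2⟩ := h2
    have hc : (r ((i, j), (k, l))).2.1 = i - l + J (k + j - i) := by linear_combination e1
    rw [show (r ((i, j), (k, l))).2.1 + (l - J (k + j - i)) - (k + j) = -(k + j - i) by
      linear_combination e1] at e2
    rw [hsym] at e2
    have hd : (r ((i, j), (k, l))).2.2 = j + J (k + j - i) := by linear_combination e2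
    exact Prod.ext h1 (Prod.ext hc hd)
  have hinv : ∀ p, r (r p) = p := by
    rintro ⟨⟨i, j⟩, ⟨k, l⟩⟩
    rw [rexp i j k l, rexp]
    rw [show i - l + J (k + j - i) + (l - J (k + j - i)) - (k + j) = -(k + j - i) by ring,
      hsym]
    simp only [Prod.mk.injEq]
    refine ⟨⟨by ring, by ring⟩, by ring, by ring⟩
  have hsbij : ∀ x : ZMod n × ZMod n, Function.Bijective (fun y => (r (x, y)).1) := by
    intro x
    have h : (fun y : ZMod n × ZMod n => (r (x, y)).1) = ⇑(sigmaEquiv n J x) := by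
      funext y
      have h1 : (r (x, y)).1 = (y.1 + x.2, y.2 - J (y.1 + x.2 - x.1)) :=
        congrArg Prod.fst (rexp x.1 x.2 y.1 y.2)
      rw [h1]; rfl
    rw [h]
    exact (sigmaEquiv n J x).bijective
  have hgbij : ∀ y : ZMod n × ZMod n, Function.Bijective (fun x => (r (x, y)).2) := by
    rintro ⟨k, l⟩
    rw [Function.bijective_iff_has_inverse]
    refine ⟨fun z => (z.1 + l - J (k + z.2 - z.1 - l), z.2 - J (k + z.2 - z.1 - l)), ?_, ?_⟩
    · rintro ⟨i, j⟩
      have h2 : (r ((i, j), (k, l))).2 = (i - l + J (k + j - i), j + J (k + j - i)) :=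
        congrArg Prod.snd (rexp i j k l)
      show ((r ((i, j), (k, l))).2.1 + l - J (k + (r ((i, j), (k, l))).2.2
          - (r ((i, j), (k, l))).2.1 - l),
        (r ((i, j), (k, l))).2.2 - J (k + (r ((i, j), (k, l))).2.2
          - (r ((i, j), (k, l))).2.1 - l)) = (i, j)
      rw [h2]
      show (i - l + J (k + j - i) + l - J (k + (j + J (k + j - i))
          - (i - l + J (k + j - i)) - l),
        j + J (k + j - i) - J (k + (j + J (k + j - i))
          - (i - l + J (k + j - i)) - l)) = (i, j)
      rw [show k + (j + J (k + j - i)) - (i - l + J (k + j - i)) - l = k + j - i by ring]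
      exact Prod.ext (by ring) (by ring)
    · rintro ⟨c, d⟩
      show (r ((c + l - J (k + d - c - l), d - J (k + d - c - l)), (k, l))).2 = (c, d)
      rw [rexp]
      show (c + l - J (k + d - c - l) - l +
          J (k + (d - J (k + d - c - l)) - (c + l - J (k + d - c - l))),
        d - J (k + d - c - l) +
          J (k + (d - J (k + d - c - l)) - (c + l - J (k + d - c - l)))) = (c, d)
      rw [show k + (d - J (k + d - c - l)) - (c + l - J (k + d - c - l)) = k + d - c - l
        by ring]
      exact Prod.ext (by ring) (by ring)
  have hbraid : yb12 r ∘ yb23 r ∘ yb12 r = yb23 r ∘ yb12 r ∘ yb23 r := by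
    funext q
    obtain ⟨⟨i, j⟩, ⟨k, l⟩, ⟨m, p⟩⟩ := q
    simp only [Function.comp_apply, yb12, yb23, rexp]
    ring_nf
  have hbig : IsYBSolution r := ⟨hinv, hsbij, hgbij, hbraid⟩
  refine ⟨hbig, ⟨?_, ?_⟩, ?_, ?_⟩
  · -- indecomposable → closure = ⊤
    intro hind
    let K : Subgroup (Equiv.Perm (ZMod n × ZMod n)) :=
      { carrier := {g | ∀ p : ZMod n × ZMod n,
          (g p).2 - p.2 ∈ AddSubgroup.closure (Set.range J)}
        one_mem' := by intro p; simpa using zero_mem (AddSubgroup.closure (Set.range J))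
        mul_mem' := by
          intro g h hg hh p
          rw [Equiv.Perm.mul_apply,
            show (g (h p)).2 - p.2 = ((g (h p)).2 - (h p).2) + ((h p).2 - p.2) by ring]
          exact add_mem (hg _) (hh _)
        inv_mem' := by
          intro g hg p
          have h1 := hg (g⁻¹ p)
          rw [Equiv.Perm.coe_inv, Equiv.apply_symm_apply] at h1
          rw [show (g⁻¹ p).2 - p.2 = -(p.2 - (g⁻¹ p).2) by ring]
          exact neg_mem h1 }
    have hK : permGroup r ≤ K := by
      rw [permGroup]
      refine (Subgroup.closure_le K).2 ?_
      rintro g ⟨x, hx⟩ p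
      have hx' : g p = (p.1 + x.2, p.2 - J (p.1 + x.2 - x.1)) := by
        rw [hx p]; exact congrArg Prod.fst (rexp x.1 x.2 p.1 p.2)
      rw [hx', show (p.1 + x.2, p.2 - J (p.1 + x.2 - x.1)).2 - p.2
        = -(J (p.1 + x.2 - x.1)) by show p.2 - J (p.1 + x.2 - x.1) - p.2 = _; ring]
      exact neg_mem (AddSubgroup.subset_closure ⟨_, rfl⟩)
    rw [eq_top_iff]
    intro t _
    obtain ⟨g, hg, hgt⟩ := hind (0, 0) (0, t)
    have h2 := hK hg (0, 0)
    rw [hgt] at h2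
    simpa using h2
  · -- closure = ⊤ → indecomposable
    intro htop
    have hsig : ∀ x : ZMod n × ZMod n, (sigmaEquiv n J x : Equiv.Perm _) ∈ permGroup r := by
      intro x
      apply Subgroup.subset_closure
      refine ⟨x, fun y => ?_⟩
      have h1 : (r (x, y)).1 = (y.1 + x.2, y.2 - J (y.1 + x.2 - x.1)) :=
        congrArg Prod.fst (rexp x.1 x.2 y.1 y.2)
      rw [h1]; rfl
    let S : AddSubgroup (ZMod n) :=
      { carrier := {c | ∀ k m : ZMod n, ∃ g ∈ permGroup r, g (k, m) = (k, m + c)}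
        zero_mem' := fun k m => ⟨1, one_mem _, by simp⟩
        add_mem' := by
          intro a b ha hb k m
          obtain ⟨g1, hg1, e1⟩ := ha k m
          obtain ⟨g2, hg2, e2⟩ := hb k (m + a)
          refine ⟨g2 * g1, mul_mem hg2 hg1, ?_⟩
          rw [Equiv.Perm.mul_apply, e1, e2, add_assoc]
        neg_mem' := by
          intro a ha k m
          obtain ⟨g, hg, e⟩ := ha k (m + -a)
          refine ⟨g⁻¹, inv_mem hg, ?_⟩
          have h1 : g (k, m + -a) = (k, m) := by
            rw [e]; exact Prod.ext rfl (by ring)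
          rw [← h1, Equiv.Perm.coe_inv, Equiv.symm_apply_apply] }
    have hJS : Set.range J ⊆ (S : Set (ZMod n)) := by
      rintro c ⟨s, rfl⟩ k m
      refine ⟨(sigmaEquiv n J (k - s, 0))⁻¹, inv_mem (hsig _), ?_⟩
      have h1 : (sigmaEquiv n J (k - s, 0)) (k, m + J s) = (k, m) := by
        show (k + 0, m + J s - J (k + 0 - (k - s))) = (k, m)
        rw [show k + 0 - (k - s) = s by ring]
        exact Prod.ext (by ring) (by ring)
      rw [← h1, Equiv.Perm.coe_inv, Equiv.symm_apply_apply]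
    have hSall : ∀ c : ZMod n, c ∈ S := by
      intro c
      have h1 : AddSubgroup.closure (Set.range J) ≤ S := (AddSubgroup.closure_le S).2 hJS
      refine h1 ?_
      rw [htop]; exact AddSubgroup.mem_top c
    rintro ⟨k, l⟩ ⟨k', l'⟩
    obtain ⟨g2, hg2, e2⟩ := hSall (l' - (l - J k')) k' (l - J k')
    refine ⟨g2 * (sigmaEquiv n J (0, k' - k) : Equiv.Perm _), mul_mem hg2 (hsig _), ?_⟩
    rw [Equiv.Perm.mul_apply]
    have h1 : (sigmaEquiv n J (0, k' - k)) (k, l) = (k', l - J k') := by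
      show (k + (k' - k), l - J (k + (k' - k) - 0)) = (k', l - J k')
      rw [show k + (k' - k) - 0 = k' by ring]
      exact Prod.ext (by ring) rfl
    rw [h1, e2]
    exact Prod.ext rfl (by ring)
  · -- irretractable → rows distinct
    intro hirr i i' hJi
    have key : ∀ z : ZMod n × ZMod n, (r ((-i, 0), z)).1 = (r ((-i', 0), z)).1 := by
      rintro ⟨a, b⟩
      simp only [rexp]
      rw [show a + 0 - -i = i + a by ring, show a + 0 - -i' = i' + a by ring, hJi a]
    have h := congrArg Prod.fst (hirr (-i, 0) (-i', 0) key)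
    exact neg_injective h
  · -- rows distinct → irretractable
    rintro hcond ⟨i, j⟩ ⟨i', j'⟩ hz
    have h0 := hz (0, 0)
    simp only [rexp, Prod.mk.injEq] at h0
    have hj : j = j' := by linear_combination h0.1
    have hk : ∀ k : ZMod n, J ((j - i) + k) = J ((j - i') + k) := by
      intro k
      have h := hz (k, 0)
      simp only [rexp, Prod.mk.injEq] at h
      have hA : J (k + j - i) = J (k + j' - i') := by linear_combination -h.2
      rw [← hj] at hA
      rw [show (j - i) + k = k + j - i by ring, show (j - i') + k = k + j - i' by ring]
      exact hA
    have hi := hcond (j - i) (j - i') hk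
    have hii : i = i' := by linear_combination -hi
    exact Prod.ext hii hj
end

section
/- Let n > 1 be an integer and let a₀,…,a_{n−1}, c₀,…,c_{n−1} ∈ ℤ/(n) (indices read modulo n) satisfy a_i = a_{−i} and c_i = c_{−i} for all i ∈ ℤ/(n). Let X = (ℤ/(n))² and let r_a and r_c be the solutions of the YBE on X given by r_a((i,j),(k,l)) = (σᵃ_{(i,j)}(k,l), (σᵃ_{σᵃ_{(i,j)}(k,l)})⁻¹(i,j)) with σᵃ_{(i,j)}(k,l) = (k + j, l − a_{k+j−i}), and analogously r_c using the family c. If there exists an invertible element u ∈ ℤ/(n) such that u·a_i = c_{u·i} for all i ∈ ℤ/(n), then the solutions (X, r_a) and (X, r_c) are isomorphic; explicitly, the map h(i,j) = (u·i, u·j) is an isomorphism of solutions from (X, r_a) to (X, r_c). -/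
open Function

/-- Proposition `iso`, first part: if `u` is invertible in `ℤ/(n)`
and `u·a_i = c_{u·i}` for all `i`, then `h(i,j) = (u·i, u·j)` is an isomorphism
of solutions from `(X, r_a)` to `(X, r_c)`. -/
theorem iso_of_scaling (n : ℕ) (hn : 1 < n)
    (a c : ZMod n → ZMod n)
    (hasym : ∀ i : ZMod n, a (-i) = a i)
    (hcsym : ∀ i : ZMod n, c (-i) = c i)
    (σa σc : ZMod n × ZMod n → ZMod n × ZMod n → ZMod n × ZMod n)
    (hσa : ∀ i j k l : ZMod n, σa (i, j) (k, l) = (k + j, l - a (k + j - i)))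
    (hσc : ∀ i j k l : ZMod n, σc (i, j) (k, l) = (k + j, l - c (k + j - i)))
    (ra rc : (ZMod n × ZMod n) × (ZMod n × ZMod n) → (ZMod n × ZMod n) × (ZMod n × ZMod n))
    (hra : ∀ x y : ZMod n × ZMod n,
      (ra (x, y)).1 = σa x y ∧ σa (σa x y) ((ra (x, y)).2) = x)
    (hrc : ∀ x y : ZMod n × ZMod n,
      (rc (x, y)).1 = σc x y ∧ σc (σc x y) ((rc (x, y)).2) = x)
    (u : (ZMod n)ˣ)
    (hu : ∀ i : ZMod n, (u : ZMod n) * a i = c ((u : ZMod n) * i)) :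
    Function.Bijective (fun x : ZMod n × ZMod n => ((u : ZMod n) * x.1, (u : ZMod n) * x.2)) ∧
    IsSolHom ra rc (fun x : ZMod n × ZMod n => ((u : ZMod n) * x.1, (u : ZMod n) * x.2)) := by
  constructor
  · constructor
    · rintro ⟨i, j⟩ ⟨k, l⟩ h
      simp only [Prod.mk.injEq] at h
      exact Prod.ext (by
        have := congrArg (fun t => ((u⁻¹ : (ZMod n)ˣ) : ZMod n) * t) h.1
        simpa [← mul_assoc] using this) (by
        have := congrArg (fun t => ((u⁻¹ : (ZMod n)ˣ) : ZMod n) * t) h.2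
        simpa [← mul_assoc] using this)
    · rintro ⟨i, j⟩
      refine ⟨(((u⁻¹ : (ZMod n)ˣ) : ZMod n) * i, ((u⁻¹ : (ZMod n)ˣ) : ZMod n) * j), ?_⟩
      simp [← mul_assoc]
  · rintro ⟨i, j⟩ ⟨k, l⟩
    simp only
    rw [(hra (i,j) (k,l)).1, (hrc (_,_) (_,_)).1, hσa, hσc]
    have key : (u : ZMod n) * (l - a (k + j - i))
        = (u : ZMod n) * l - c ((u : ZMod n) * k + (u : ZMod n) * j - (u : ZMod n) * i) := by
      rw [mul_sub, hu]
      ring_nf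
    exact Prod.ext (by ring) key
end

section
/- Let n > 1 be an integer and let a₀,…,a_{n−1}, c₀,…,c_{n−1} ∈ ℤ/(n) (indices read modulo n) satisfy a_i = a_{−i} and c_i = c_{−i} for all i ∈ ℤ/(n). Let X = (ℤ/(n))² and let r_a and r_c be the solutions of the YBE on X given by r_a((i,j),(k,l)) = (σᵃ_{(i,j)}(k,l), (σᵃ_{σᵃ_{(i,j)}(k,l)})⁻¹(i,j)) with σᵃ_{(i,j)}(k,l) = (k + j, l − a_{k+j−i}), and analogously r_c using the family c. Suppose that the n×n circulant matrices A = (a_{k−i})_{i,k∈ℤ/(n)} and C = (c_{k−i})_{i,k∈ℤ/(n)} are both invertible over ℤ/(n) (equivalently, the associated bilinear forms are non-singular). If the solutions (X, r_a) and (X, r_c) are isomorphic, then there exists an invertible element u ∈ ℤ/(n) such that u·a_i = c_{u·i} for all i ∈ ℤ/(n). -/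
open Function

/-- Proposition `iso`, converse: if the circulant matrices
associated with `a` and `c` are invertible over `ℤ/(n)` and the solutions
`(X, r_a)` and `(X, r_c)` are isomorphic, then there is an invertible `u` with
`u·a_i = c_{u·i}` for all `i`. -/
theorem scaling_of_iso (n : ℕ) (hn : 1 < n) [NeZero n]
    (a c : ZMod n → ZMod n)
    (hasym : ∀ i : ZMod n, a (-i) = a i)
    (hcsym : ∀ i : ZMod n, c (-i) = c i)
    (hA : IsUnit (Matrix.det (Matrix.of fun i k : ZMod n => a (k - i))))
    (hC : IsUnit (Matrix.det (Matrix.of fun i k : ZMod n => c (k - i))))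
    (σa σc : ZMod n × ZMod n → ZMod n × ZMod n → ZMod n × ZMod n)
    (hσa : ∀ i j k l : ZMod n, σa (i, j) (k, l) = (k + j, l - a (k + j - i)))
    (hσc : ∀ i j k l : ZMod n, σc (i, j) (k, l) = (k + j, l - c (k + j - i)))
    (ra rc : (ZMod n × ZMod n) × (ZMod n × ZMod n) → (ZMod n × ZMod n) × (ZMod n × ZMod n))
    (hra : ∀ x y : ZMod n × ZMod n,
      (ra (x, y)).1 = σa x y ∧ σa (σa x y) ((ra (x, y)).2) = x)
    (hrc : ∀ x y : ZMod n × ZMod n,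
      (rc (x, y)).1 = σc x y ∧ σc (σc x y) ((rc (x, y)).2) = x)
    (hiso : ∃ f : ZMod n × ZMod n → ZMod n × ZMod n,
      Function.Bijective f ∧ IsSolHom ra rc f) :
    ∃ u : (ZMod n)ˣ, ∀ i : ZMod n, (u : ZMod n) * a i = c ((u : ZMod n) * i) := by

  obtain ⟨f, hfbij, hfhom⟩ := hiso
  -- The master equation: both components of `f (σa x y) = σc (f x) (f y)`.
  have E : ∀ i j k l : ZMod n, f (k + j, l - a (k + j - i)) =
      ((f (k, l)).1 + (f (i, j)).2,
       (f (k, l)).2 - c ((f (k, l)).1 + (f (i, j)).2 - (f (i, j)).1)) := by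
    intro i j k l
    have h := hfhom (i, j) (k, l)
    rw [(hra (i, j) (k, l)).1, (hrc (f (i, j)) (f (k, l))).1, hσa i j k l] at h
    rw [show f (i, j) = ((f (i, j)).1, (f (i, j)).2) from rfl,
        show f (k, l) = ((f (k, l)).1, (f (k, l)).2) from rfl, hσc] at h
    exact h
  have E1 : ∀ i j k l : ZMod n, (f (k + j, l - a (k + j - i))).1
      = (f (k, l)).1 + (f (i, j)).2 := by
    intro i j k l; rw [E i j k l]
  have E2 : ∀ i j k l : ZMod n, (f (k + j, l - a (k + j - i))).2
      = (f (k, l)).2 - c ((f (k, l)).1 + (f (i, j)).2 - (f (i, j)).1) := by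
    intro i j k l; rw [E i j k l]
  -- Step A : `j = 0` instance.
  have hA1 : ∀ s k l : ZMod n, (f (k, l - a s)).1
      = (f (k, l)).1 + (f (k - s, (0 : ZMod n))).2 := by
    intro s k l
    simpa [sub_sub_cancel] using E1 (k - s) 0 k l
  -- Step B.
  have hB : ∀ i j k l : ZMod n, (f (k + j, l)).1 + (f (i, (0 : ZMod n))).2
      = (f (k, l)).1 + (f (i, j)).2 := by
    intro i j k l
    have h1 := E1 i j k l
    have h2 := hA1 (k + j - i) (k + j) l
    rw [sub_sub_cancel] at h2
    linear_combination h1 - h2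
  -- Step D : first coordinate is translated by `θ j := F2(0,j) - F2(0,0)`.
  have hD : ∀ j k l : ZMod n, (f (k + j, l)).1
      = (f (k, l)).1 + ((f ((0 : ZMod n), j)).2 - (f ((0 : ZMod n), (0 : ZMod n))).2) := by
    intro j k l
    linear_combination hB 0 j k l
  -- `F2(i,0)` is constant.
  have hconst : ∀ i : ZMod n, (f (i, (0 : ZMod n))).2
      = (f ((0 : ZMod n), (0 : ZMod n))).2 := by
    intro i
    have h1 := hA1 0 (0 + i) 0
    rw [show (0 : ZMod n) + i - 0 = i from by ring] at h1
    have h2 := hA1 0 0 0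
    rw [show (0 : ZMod n) - 0 = 0 from by ring] at h2
    have h3 := hD i 0 (0 - a 0)
    have h4 := hD i 0 0
    linear_combination h2 + h3 - h1 - h4
  -- `F2(i,j) = F2(i,0) + θ j`.
  have hC2 : ∀ i j : ZMod n, (f (i, j)).2
      = (f (i, (0 : ZMod n))).2
        + ((f ((0 : ZMod n), j)).2 - (f ((0 : ZMod n), (0 : ZMod n))).2) := by
    intro i j
    linear_combination hD j 0 0 - hB i j 0 0
  -- `θ` is additive.
  have hadd : ∀ x y : ZMod n,
      (f ((0 : ZMod n), x + y)).2 - (f ((0 : ZMod n), (0 : ZMod n))).2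
      = ((f ((0 : ZMod n), x)).2 - (f ((0 : ZMod n), (0 : ZMod n))).2)
        + ((f ((0 : ZMod n), y)).2 - (f ((0 : ZMod n), (0 : ZMod n))).2) := by
    intro x y
    have h1 := hD (x + y) 0 0
    rw [show (0 : ZMod n) + (x + y) = 0 + x + y from by ring] at h1
    have h2 := hD y (0 + x) 0
    have h3 := hD x 0 0
    linear_combination h2 + h3 - h1
  -- `θ` is linear: `θ x = θ 1 * x`.
  have hlin : ∀ x : ZMod n,
      (f ((0 : ZMod n), x)).2 - (f ((0 : ZMod n), (0 : ZMod n))).2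
      = ((f ((0 : ZMod n), (1 : ZMod n))).2 - (f ((0 : ZMod n), (0 : ZMod n))).2) * x := by
    have hnat : ∀ m : ℕ,
        (f ((0 : ZMod n), ((m : ℕ) : ZMod n))).2 - (f ((0 : ZMod n), (0 : ZMod n))).2
        = ((f ((0 : ZMod n), (1 : ZMod n))).2 - (f ((0 : ZMod n), (0 : ZMod n))).2)
          * ((m : ℕ) : ZMod n) := by
      intro m
      induction m with
      | zero => simp
      | succ m ih =>
        push_cast
        push_cast at ih
        linear_combination hadd (m : ZMod n) 1 + ih
    intro x
    have h := hnat x.val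
    rwa [show ((x.val : ℕ) : ZMod n) = x from ZMod.natCast_rightInverse x] at h
  -- `u := θ 1` is a unit, by surjectivity of `f`.
  obtain ⟨p, hp⟩ := hfbij.2 ((0 : ZMod n), (1 : ZMod n) + (f ((0 : ZMod n), (0 : ZMod n))).2)
  obtain ⟨p1, p2⟩ := p
  have hp2 : (f (p1, p2)).2 = 1 + (f ((0 : ZMod n), (0 : ZMod n))).2 := by rw [hp]
  have hval : ((f ((0 : ZMod n), (1 : ZMod n))).2 - (f ((0 : ZMod n), (0 : ZMod n))).2) * p2
      = 1 := by
    linear_combination hp2 - hC2 p1 p2 - hconst p1 - hlin p2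
  obtain ⟨U, hU⟩ := IsUnit.of_mul_eq_one _ hval
  refine ⟨U, fun s => ?_⟩
  rw [hU]
  -- The key instance of the second-component equation.
  have h := E2 0 (-(a 0)) (s + a 0) 0
  simp only [sub_zero] at h
  rw [show s + a 0 + -a 0 = s from by ring] at h
  have harg : (f (s + a 0, (0 : ZMod n))).1 + (f ((0 : ZMod n), -a 0)).2
      - (f ((0 : ZMod n), -a 0)).1
      = ((f ((0 : ZMod n), (1 : ZMod n))).2 - (f ((0 : ZMod n), (0 : ZMod n))).2) * s := by
    have hDk := hD (s + a 0) 0 0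
    rw [show (0 : ZMod n) + (s + a 0) = s + a 0 from zero_add _] at hDk
    have hha := hA1 0 0 0
    rw [show (0 : ZMod n) - 0 = 0 from by ring,
        show (0 : ZMod n) - a 0 = -a 0 from zero_sub _] at hha
    linear_combination hDk + hlin (s + a 0) + hlin (-a 0) - hha
  rw [harg] at h
  linear_combination -h + hC2 s (0 - a s) + hlin (0 - a s) + hconst s - hconst (s + a 0)
end
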